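/- arXiv:2003.02147 — 8 statements merged into one kernel-verified Lean document; each statement's English description precedes it below -/
import Mathlib

section
/- Let M be a compact metric space and φ : ℝ × M → M a continuous flow (φ(0,x) = x, φ(t+s,x) = φ(t, φ(s,x))). Let T > 0 and let μ be a finite Borel measure on M with full support such that, for some c ≥ 1, c^{-1} μ(A) ≤ μ(φ(t,·)(A)) ≤ c μ(A) for every Borel set A ⊆ M and every t ∈ [−T, T]. Let χ : M → ℝ be continuous. For u₀ ∈ L²(M, μ) define u(t,x) = u₀(φ(t,x)). Then the following are equivalent: (i) there exists C₀ > 0 such that ∫₀^T ∫_M χ(x)² u(t,x)² dμ(x) dt ≥ C₀ ∫_M u₀² dμ for every u₀ ∈ L²(M, μ); (ii) for every x ∈ M there exists t ∈ (0,T) with χ(φ(−t,x)) ≠ 0. -/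
open MeasureTheory
open scoped ENNReal NNReal

/-- Observability of the free transport equation along a continuous flow on a compact
metric space, with respect to a finite quasi-invariant measure of full support, is
equivalent to the Geometric Control Condition. -/
theorem stmt2 {M : Type*} [MetricSpace M] [CompactSpace M]
    [MeasurableSpace M] [BorelSpace M]
    (φ : ℝ × M → M) (hφc : Continuous φ)
    (hφ0 : ∀ x : M, φ (0, x) = x)
    (hφadd : ∀ (t s : ℝ) (x : M), φ (t + s, x) = φ (t, φ (s, x)))
    (T : ℝ) (hT : 0 < T)
    (μ : Measure M) [IsFiniteMeasure μ]
    (hsupp : ∀ U : Set M, IsOpen U → U.Nonempty → 0 < μ U)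
    (c : ℝ≥0) (hc : 1 ≤ c)
    (hqi : ∀ A : Set M, MeasurableSet A → ∀ t ∈ Set.Icc (-T) T,
      (c : ℝ≥0∞)⁻¹ * μ A ≤ μ ((fun x => φ (t, x)) '' A) ∧
      μ ((fun x => φ (t, x)) '' A) ≤ (c : ℝ≥0∞) * μ A)
    (χ : M → ℝ) (hχ : Continuous χ) :
    (∃ C₀ > 0, ∀ u₀ : M → ℝ, MemLp u₀ 2 μ →
      C₀ * ∫ x, (u₀ x)^2 ∂μ ≤
        ∫ t in (0:ℝ)..T, ∫ x, (χ x)^2 * (u₀ (φ (t, x)))^2 ∂μ) ↔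
    (∀ x : M, ∃ t ∈ Set.Ioo (0:ℝ) T, χ (φ (-t, x)) ≠ 0) := by
  -- basic facts about the flow
  have hinv : ∀ (t : ℝ) (x : M), φ (-t, φ (t, x)) = x := by
    intro t x; rw [← hφadd]; simp [hφ0]
  have hinv' : ∀ (t : ℝ) (x : M), φ (t, φ (-t, x)) = x := by
    intro t x; rw [← hφadd]; simp [hφ0]
  have hφtc : ∀ t : ℝ, Continuous fun x : M => φ (t, x) := fun t =>
    hφc.comp (continuous_const.prodMk continuous_id)
  have hφtm : ∀ t : ℝ, Measurable fun x : M => φ (t, x) := fun t => (hφtc t).measurable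
  have hpre : ∀ (t : ℝ) (A : Set M),
      (fun x => φ (t, x)) ⁻¹' A = (fun x => φ (-t, x)) '' A := by
    intro t A
    ext x
    constructor
    · intro hx; exact ⟨φ (t, x), hx, hinv t x⟩
    · rintro ⟨a, ha, rfl⟩
      simpa [hinv' t a] using ha
  -- constants
  have hcR : (0:ℝ) < (c : ℝ) := by exact_mod_cast lt_of_lt_of_le zero_lt_one hc
  have hc0 : (c : ℝ≥0∞) ≠ 0 := by
    simp only [ne_eq, ENNReal.coe_eq_zero]
    exact fun h => by simp [h] at hc
  have hcne : (c : ℝ≥0∞) ≠ ⊤ := ENNReal.coe_ne_top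
  have hcinvne : (c : ℝ≥0∞)⁻¹ ≠ ⊤ := by
    simp [ENNReal.inv_ne_top, hc0]
  -- membership in Icc for negation
  have hneg : ∀ t ∈ Set.Icc (-T) T, -t ∈ Set.Icc (-T) T := by
    intro t ht; exact ⟨by linarith [ht.2], by linarith [ht.1]⟩
  have h0T : ∀ t ∈ Set.Icc (0:ℝ) T, t ∈ Set.Icc (-T) T := by
    intro t ht; exact ⟨by linarith [ht.1], ht.2⟩
  -- the pushforward measure is comparable to μ
  have hmap : ∀ t ∈ Set.Icc (-T) T, ∀ A : Set M, MeasurableSet A →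
      (c : ℝ≥0∞)⁻¹ * μ A ≤ (Measure.map (fun x => φ (t, x)) μ) A ∧
      (Measure.map (fun x => φ (t, x)) μ) A ≤ (c : ℝ≥0∞) * μ A := by
    intro t ht A hA
    rw [Measure.map_apply (hφtm t) hA, hpre t A]
    exact hqi A hA (-t) (hneg t ht)
  have hmaple : ∀ t ∈ Set.Icc (-T) T,
      Measure.map (fun x => φ (t, x)) μ ≤ (c : ℝ≥0∞) • μ := by
    intro t ht
    rw [Measure.le_iff]
    intro s hs
    rw [Measure.smul_apply, smul_eq_mul]
    exact (hmap t ht s hs).2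
  have hmapge : ∀ t ∈ Set.Icc (-T) T,
      (c : ℝ≥0∞)⁻¹ • μ ≤ Measure.map (fun x => φ (t, x)) μ := by
    intro t ht
    rw [Measure.le_iff]
    intro s hs
    rw [Measure.smul_apply, smul_eq_mul]
    exact (hmap t ht s hs).1
  -- dispatch the empty case
  rcases isEmpty_or_nonempty M with hM | hM
  · have hμ0 : μ = 0 := by
      ext s hs
      have : s = ∅ := Set.eq_empty_of_isEmpty s
      simp [this]
    constructor
    · intro _ x; exact (IsEmpty.false x).elim
    · intro _
      refine ⟨1, one_pos, fun u₀ _ => ?_⟩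
      simp [hμ0]
  constructor
  · -- observability implies GCC
    rintro ⟨C₀, hC₀, hobs⟩ x₀
    by_contra hcon
    push_neg at hcon
    -- χ vanishes on the whole backward trajectory on [0, T]
    have hzero : ∀ t ∈ Set.Icc (0:ℝ) T, χ (φ (-t, x₀)) = 0 := by
      intro t ht
      have hcl : IsClosed {t : ℝ | χ (φ (-t, x₀)) = 0} := by
        have : Continuous fun t : ℝ => χ (φ (-t, x₀)) :=
          hχ.comp (hφc.comp ((continuous_neg).prodMk continuous_const))
        exact isClosed_eq this continuous_const
      have hsub : Set.Icc (0:ℝ) T ⊆ {t : ℝ | χ (φ (-t, x₀)) = 0} := by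
        rw [← closure_Ioo hT.ne]
        exact closure_minimal (fun s hs => hcon s hs) hcl
      exact hsub ht
    set ε : ℝ := C₀ / ((c : ℝ) * T * 2) with hεdef
    have hε : 0 < ε := by positivity
    -- points where χ² is at least ε cannot be carried into a neighborhood of x₀
    set S : Set (ℝ × M) := {p | p.1 ∈ Set.Icc (0:ℝ) T ∧ ε ≤ (χ p.2)^2} with hSdef
    have hScl : IsClosed S := by
      have h1 : IsClosed {p : ℝ × M | p.1 ∈ Set.Icc (0:ℝ) T} :=
        isClosed_Icc.preimage continuous_fst
      have h2 : IsClosed {p : ℝ × M | ε ≤ (χ p.2)^2} :=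
        isClosed_le continuous_const ((hχ.comp continuous_snd).pow 2)
      exact h1.inter h2
    have hScomp : IsCompact S := by
      have hsub : S ⊆ Set.Icc (0:ℝ) T ×ˢ (Set.univ : Set M) := fun p hp =>
        Set.mk_mem_prod hp.1 (Set.mem_univ _)
      exact (isCompact_Icc.prod isCompact_univ).of_isClosed_subset hScl hsub
    set D : Set M := φ '' S with hDdef
    have hDcomp : IsCompact D := hScomp.image hφc
    have hx₀D : x₀ ∉ D := by
      rintro ⟨⟨t, x⟩, ⟨ht, hεx⟩, hphi⟩
      have hx : x = φ (-t, x₀) := by rw [← hphi, hinv]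
      rw [hx, hzero t ht] at hεx
      simp at hεx
      linarith
    obtain ⟨r, hr, hball⟩ := Metric.isOpen_iff.mp hDcomp.isClosed.isOpen_compl x₀ hx₀D
    set B : Set M := Metric.ball x₀ r with hBdef
    have hBmeas : MeasurableSet B := measurableSet_ball
    have hBpos : 0 < μ B := hsupp B Metric.isOpen_ball ⟨x₀, Metric.mem_ball_self hr⟩
    have hBne : μ B ≠ ⊤ := measure_ne_top μ B
    have hmB : 0 < (μ B).toReal := ENNReal.toReal_pos hBpos.ne' hBne
    set u₀ : M → ℝ := B.indicator (fun _ => (1:ℝ)) with hu₀def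
    have hu₀mem : MemLp u₀ 2 μ :=
      memLp_indicator_const 2 hBmeas 1 (Or.inr hBne)
    have hsq : ∀ x, (u₀ x)^2 = B.indicator (fun _ => (1:ℝ)) x := by
      intro x
      by_cases hx : x ∈ B <;> simp [hu₀def, Set.indicator, hx]
    have hL2 : ∫ x, (u₀ x)^2 ∂μ = (μ B).toReal := by
      simp only [hsq]
      rw [integral_indicator_const _ hBmeas]
      simp [measureReal_def]
    have hobs' := hobs u₀ hu₀mem
    rw [hL2] at hobs'
    -- bound the observation term
    set F : ℝ → ℝ := fun t => ∫ x, (χ x)^2 * (u₀ (φ (t, x)))^2 ∂μ with hFdef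
    have hFbound : ∀ t ∈ Set.Icc (0:ℝ) T, F t ≤ ε * ((c:ℝ) * (μ B).toReal) := by
      intro t ht
      set A : Set M := (fun x => φ (t, x)) ⁻¹' B with hAdef
      have hAmeas : MeasurableSet A := (hφtm t) hBmeas
      have hAle : μ A ≤ (c : ℝ≥0∞) * μ B := by
        rw [hAdef, hpre t B]
        exact (hqi B hBmeas (-t) (hneg t (h0T t ht))).2
      have hpt : ∀ x, (χ x)^2 * (u₀ (φ (t, x)))^2 ≤ A.indicator (fun _ => ε) x := by
        intro x
        by_cases hx : φ (t, x) ∈ B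
        · have hu1 : u₀ (φ (t, x)) = 1 := by simp [hu₀def, Set.indicator, hx]
          have hxA : x ∈ A := hx
          rw [hu1, Set.indicator_of_mem hxA, one_pow, mul_one]
          by_contra hlt
          push_neg at hlt
          have hpS : (t, x) ∈ S := ⟨ht, hlt.le⟩
          have : φ (t, x) ∈ D := ⟨(t, x), hpS, rfl⟩
          exact (hball hx) this
        · have hu0 : u₀ (φ (t, x)) = 0 := by simp [hu₀def, Set.indicator, hx]
          have hxA : x ∉ A := hx
          rw [hu0, Set.indicator_of_notMem hxA]
          simp
      have hint : Integrable (A.indicator (fun _ => ε)) μ :=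
        (integrable_const ε).indicator hAmeas
      have h1 : F t ≤ ∫ x, A.indicator (fun _ => ε) x ∂μ := by
        refine integral_mono_of_nonneg ?_ hint (Filter.Eventually.of_forall hpt)
        exact Filter.Eventually.of_forall fun x => mul_nonneg (sq_nonneg _) (sq_nonneg _)
      have h2 : ∫ x, A.indicator (fun _ => ε) x ∂μ = (μ A).toReal * ε := by
        rw [integral_indicator_const _ hAmeas]; simp [mul_comm, measureReal_def]
      have h3 : (μ A).toReal ≤ (c:ℝ) * (μ B).toReal := by
        have := ENNReal.toReal_mono (by finiteness) hAle
        rwa [ENNReal.toReal_mul, ENNReal.coe_toReal] at this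
      calc F t ≤ (μ A).toReal * ε := h1.trans h2.le
        _ ≤ ((c:ℝ) * (μ B).toReal) * ε := by
            apply mul_le_mul_of_nonneg_right h3 hε.le
        _ = ε * ((c:ℝ) * (μ B).toReal) := by ring
    by_cases hFi : IntervalIntegrable F MeasureTheory.volume 0 T
    · have hup : ∫ t in (0:ℝ)..T, F t ≤ T * (ε * ((c:ℝ) * (μ B).toReal)) := by
        have := intervalIntegral.integral_mono_on hT.le hFi
          (intervalIntegrable_const (c := ε * ((c:ℝ) * (μ B).toReal))) hFbound
        rwa [intervalIntegral.integral_const, smul_eq_mul, sub_zero] at this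
      have : C₀ * (μ B).toReal ≤ T * (ε * ((c:ℝ) * (μ B).toReal)) := le_trans hobs' hup
      rw [hεdef] at this
      have heq : T * (C₀ / ((c : ℝ) * T * 2) * ((c:ℝ) * (μ B).toReal))
          = C₀ * (μ B).toReal / 2 := by
        field_simp
      rw [heq] at this
      nlinarith
    · rw [intervalIntegral.integral_undef hFi] at hobs'
      nlinarith
  · -- GCC implies observability
    intro hgcc
    -- the averaged observation function
    set q : M → ℝ → ℝ := fun y t => (χ (φ (-t, y)))^2 with hqdef
    have hqc : Continuous (Function.uncurry q) := by
      have : Continuous fun p : M × ℝ => χ (φ (-p.2, p.1)) :=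
        hχ.comp (hφc.comp ((continuous_snd.neg).prodMk continuous_fst))
      exact this.pow 2
    set G : M → ℝ := fun y => ∫ t in (0:ℝ)..T, q y t with hGdef
    have hGc : Continuous G :=
      intervalIntegral.continuous_parametric_intervalIntegral_of_continuous hqc continuous_const
    have hqyc : ∀ y, Continuous (q y) := fun y =>
      hqc.comp (Continuous.prodMk_right y)
    have hGpos : ∀ y, 0 < G y := by
      intro y
      obtain ⟨t₀, ht₀, hχ0⟩ := hgcc y
      rw [hGdef]
      simp only
      rw [intervalIntegral.integral_of_le hT.le]
      rw [setIntegral_pos_iff_support_of_nonneg_ae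
        (Filter.Eventually.of_forall fun t => sq_nonneg _)
        ((hqyc y).integrableOn_Ioc)]
      have hopen : IsOpen (Function.support (q y) ∩ Set.Ioo 0 T) :=
        ((hqyc y).isOpen_support).inter isOpen_Ioo
      have hmem : t₀ ∈ Function.support (q y) ∩ Set.Ioo 0 T :=
        ⟨pow_ne_zero 2 hχ0, ht₀⟩
      have hposvol : 0 < MeasureTheory.volume (Function.support (q y) ∩ Set.Ioo 0 T) :=
        hopen.measure_pos _ ⟨t₀, hmem⟩
      exact lt_of_lt_of_le hposvol (measure_mono
        (Set.inter_subset_inter_right _ Set.Ioo_subset_Ioc_self))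
    obtain ⟨y₀, -, hy₀⟩ := isCompact_univ.exists_isMinOn Set.univ_nonempty hGc.continuousOn
    set δ : ℝ := G y₀ with hδdef
    have hδ : 0 < δ := hGpos y₀
    have hGδ : ∀ y, δ ≤ G y := fun y => hy₀ (Set.mem_univ y)
    refine ⟨δ / (c:ℝ), div_pos hδ hcR, fun u₀ hu₀ => ?_⟩
    -- replace u₀ by a measurable representative
    obtain ⟨g, hgsm, hug⟩ := hu₀.1
    have hgm : Measurable g := hgsm.measurable
    have hgmem : MemLp g 2 μ := hu₀.ae_eq hug
    have hgsq : Integrable (fun x => g x ^ 2) μ := hgmem.integrable_sq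
    set E : ℝ := ∫ x, (g x)^2 ∂μ with hEdef
    have hEnn : 0 ≤ E := integral_nonneg fun x => sq_nonneg _
    have hEeq : ∫ x, (u₀ x)^2 ∂μ = E := by
      refine integral_congr_ae (hug.mono fun x hx => ?_)
      simp [hx]
    have hElin : ENNReal.ofReal E = ∫⁻ x, ENNReal.ofReal ((g x)^2) ∂μ :=
      ofReal_integral_eq_lintegral_ofReal hgsq
        (Filter.Eventually.of_forall fun x => sq_nonneg _)
    -- a.e. equality of compositions along the flow
    have hae : ∀ t ∈ Set.Icc (-T) T,
        (fun x => u₀ (φ (t, x))) =ᵐ[μ] fun x => g (φ (t, x)) := by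
      intro t ht
      have h0 : μ {x | u₀ x ≠ g x} = 0 := by
        have := hug
        rwa [Filter.EventuallyEq, MeasureTheory.ae_iff] at this
      set N := toMeasurable μ {x | u₀ x ≠ g x} with hNdef
      have hNm : MeasurableSet N := measurableSet_toMeasurable _ _
      have hN0 : μ N = 0 := by rw [hNdef, measure_toMeasurable]; exact h0
      have hpre0 : μ ((fun x => φ (t, x)) ⁻¹' N) = 0 := by
        rw [hpre t N]
        have h := (hqi N hNm (-t) (hneg t ht)).2
        rw [hN0, mul_zero] at h
        exact le_antisymm h zero_le
      rw [Filter.EventuallyEq, MeasureTheory.ae_iff]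
      refine measure_mono_null ?_ hpre0
      intro x hx
      simp only [Set.mem_setOf_eq] at hx ⊢
      exact subset_toMeasurable μ _ hx
    -- bound on χ²
    obtain ⟨z₀, -, hz₀⟩ := isCompact_univ.exists_isMaxOn Set.univ_nonempty
      ((hχ.pow 2).continuousOn)
    set Cχ : ℝ := (χ z₀)^2 with hCχdef
    have hCχnn : 0 ≤ Cχ := sq_nonneg _
    have hCχ : ∀ x, (χ x)^2 ≤ Cχ := fun x => hz₀ (Set.mem_univ x)
    -- the lintegral version of the inner integral
    set Φ : ℝ → ℝ≥0∞ := fun t => ∫⁻ x, ENNReal.ofReal ((χ x)^2 * (g (φ (t, x)))^2) ∂μ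
      with hΦdef
    have hm1 : Measurable fun p : ℝ × M => ENNReal.ofReal ((χ p.2)^2 * (g (φ p))^2) := by
      apply ENNReal.measurable_ofReal.comp
      exact (((hχ.comp continuous_snd).pow 2).measurable).mul
        ((hgm.comp hφc.measurable).pow_const 2)
    have hΦm : Measurable Φ := by
      apply Measurable.lintegral_prod_right (f := fun t x =>
        ENNReal.ofReal ((χ x)^2 * (g (φ (t, x)))^2))
      exact hm1
    -- upper bound for Φ
    set Bnd : ℝ≥0∞ := ENNReal.ofReal Cχ * ((c : ℝ≥0∞) * ENNReal.ofReal E) with hBnddef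
    have hBndne : Bnd ≠ ⊤ := by finiteness
    have hgcomp : ∀ t ∈ Set.Icc (-T) T,
        ∫⁻ x, ENNReal.ofReal ((g (φ (t, x)))^2) ∂μ ≤ (c : ℝ≥0∞) * ENNReal.ofReal E := by
      intro t ht
      have hfmeas : Measurable fun y => ENNReal.ofReal ((g y)^2) :=
        ENNReal.measurable_ofReal.comp (hgm.pow_const 2)
      rw [← lintegral_map hfmeas (hφtm t)]
      calc ∫⁻ y, ENNReal.ofReal ((g y)^2) ∂(Measure.map (fun x => φ (t, x)) μ)
          ≤ ∫⁻ y, ENNReal.ofReal ((g y)^2) ∂((c : ℝ≥0∞) • μ) :=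
            lintegral_mono' (hmaple t ht) le_rfl
        _ = (c : ℝ≥0∞) * ∫⁻ y, ENNReal.ofReal ((g y)^2) ∂μ := lintegral_smul_measure _ _
        _ = (c : ℝ≥0∞) * ENNReal.ofReal E := by rw [hElin]
    have hΦbd : ∀ t ∈ Set.Icc (-T) T, Φ t ≤ Bnd := by
      intro t ht
      rw [hΦdef, hBnddef]
      calc ∫⁻ x, ENNReal.ofReal ((χ x)^2 * (g (φ (t, x)))^2) ∂μ
          ≤ ∫⁻ x, ENNReal.ofReal Cχ * ENNReal.ofReal ((g (φ (t, x)))^2) ∂μ := by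
            refine lintegral_mono fun x => ?_
            rw [← ENNReal.ofReal_mul hCχnn]
            exact ENNReal.ofReal_le_ofReal
              (mul_le_mul_of_nonneg_right (hCχ x) (sq_nonneg _))
        _ = ENNReal.ofReal Cχ * ∫⁻ x, ENNReal.ofReal ((g (φ (t, x)))^2) ∂μ :=
            lintegral_const_mul' _ _ ENNReal.ofReal_ne_top
        _ ≤ ENNReal.ofReal Cχ * ((c : ℝ≥0∞) * ENNReal.ofReal E) := by
            exact mul_le_mul_right (hgcomp t ht) _
    -- lower bound for Φ via quasi-invariance
    have hΦlow : ∀ t ∈ Set.Icc (0:ℝ) T,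
        (c : ℝ≥0∞)⁻¹ * ∫⁻ y, ENNReal.ofReal ((χ (φ (-t, y)))^2 * (g y)^2) ∂μ ≤ Φ t := by
      intro t ht
      have hfmeas : Measurable fun y => ENNReal.ofReal ((χ (φ (-t, y)))^2 * (g y)^2) := by
        apply ENNReal.measurable_ofReal.comp
        exact (((hχ.comp (hφtc (-t))).pow 2).measurable).mul (hgm.pow_const 2)
      have h1 : (c : ℝ≥0∞)⁻¹ * ∫⁻ y, ENNReal.ofReal ((χ (φ (-t, y)))^2 * (g y)^2) ∂μ
          = ∫⁻ y, ENNReal.ofReal ((χ (φ (-t, y)))^2 * (g y)^2) ∂((c : ℝ≥0∞)⁻¹ • μ) :=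
        by rw [lintegral_smul_measure, smul_eq_mul]
      rw [h1]
      calc ∫⁻ y, ENNReal.ofReal ((χ (φ (-t, y)))^2 * (g y)^2) ∂((c : ℝ≥0∞)⁻¹ • μ)
          ≤ ∫⁻ y, ENNReal.ofReal ((χ (φ (-t, y)))^2 * (g y)^2)
              ∂(Measure.map (fun x => φ (t, x)) μ) :=
            lintegral_mono' (hmapge t (h0T t ht)) le_rfl
        _ = ∫⁻ x, ENNReal.ofReal ((χ (φ (-t, φ (t, x))))^2 * (g (φ (t, x)))^2) ∂μ :=
            lintegral_map hfmeas (hφtm t)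
        _ = Φ t := by
            rw [hΦdef]
            exact lintegral_congr fun x => by rw [hinv t x]
    -- swap the order of integration for the lower bound
    have hswap : ∫⁻ t in Set.Ioc (0:ℝ) T,
          (∫⁻ y, ENNReal.ofReal ((χ (φ (-t, y)))^2 * (g y)^2) ∂μ) ∂MeasureTheory.volume
        = ∫⁻ y, (∫⁻ t in Set.Ioc (0:ℝ) T,
            ENNReal.ofReal ((χ (φ (-t, y)))^2 * (g y)^2) ∂MeasureTheory.volume) ∂μ := by
      apply lintegral_lintegral_swap
      apply Measurable.aemeasurable
      apply ENNReal.measurable_ofReal.comp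
      have hc1 : Continuous fun p : ℝ × M => (χ (φ (-p.1, p.2)))^2 :=
        (hχ.comp (hφc.comp ((continuous_fst.neg).prodMk continuous_snd))).pow 2
      exact hc1.measurable.mul ((hgm.comp measurable_snd).pow_const 2)
    have hinner : ∀ y, ENNReal.ofReal δ * ENNReal.ofReal ((g y)^2)
        ≤ ∫⁻ t in Set.Ioc (0:ℝ) T,
            ENNReal.ofReal ((χ (φ (-t, y)))^2 * (g y)^2) ∂MeasureTheory.volume := by
      intro y
      have heqf : ∀ t : ℝ, ENNReal.ofReal ((χ (φ (-t, y)))^2 * (g y)^2)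
          = ENNReal.ofReal (q y t) * ENNReal.ofReal ((g y)^2) := fun t =>
        ENNReal.ofReal_mul (sq_nonneg _)
      simp only [heqf]
      rw [lintegral_mul_const' _ _ ENNReal.ofReal_ne_top]
      have hGy : ∫⁻ t in Set.Ioc (0:ℝ) T, ENNReal.ofReal (q y t) ∂MeasureTheory.volume
          = ENNReal.ofReal (G y) := by
        rw [hGdef]
        simp only
        rw [intervalIntegral.integral_of_le hT.le]
        exact (ofReal_integral_eq_lintegral_ofReal ((hqyc y).integrableOn_Ioc)
          (Filter.Eventually.of_forall fun t => sq_nonneg _)).symm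
      rw [hGy]
      exact mul_le_mul_left (ENNReal.ofReal_le_ofReal (hGδ y)) _
    -- assemble the lower bound on the time-integrated lintegral
    have hmain : (c : ℝ≥0∞)⁻¹ * (ENNReal.ofReal δ * ENNReal.ofReal E)
        ≤ ∫⁻ t in Set.Ioc (0:ℝ) T, Φ t ∂MeasureTheory.volume := by
      have step1 : ∫⁻ t in Set.Ioc (0:ℝ) T,
          ((c : ℝ≥0∞)⁻¹ * ∫⁻ y, ENNReal.ofReal ((χ (φ (-t, y)))^2 * (g y)^2) ∂μ)
            ∂MeasureTheory.volume
          ≤ ∫⁻ t in Set.Ioc (0:ℝ) T, Φ t ∂MeasureTheory.volume := by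
        refine setLIntegral_mono hΦm fun t ht => ?_
        exact hΦlow t ⟨le_of_lt ht.1, ht.2⟩
      refine le_trans ?_ step1
      rw [lintegral_const_mul' _ _ hcinvne, hswap]
      apply mul_le_mul_right
      calc ENNReal.ofReal δ * ENNReal.ofReal E
          = ∫⁻ y, ENNReal.ofReal δ * ENNReal.ofReal ((g y)^2) ∂μ := by
            rw [lintegral_const_mul' _ _ ENNReal.ofReal_ne_top, hElin]
        _ ≤ _ := lintegral_mono fun y => hinner y
    -- finiteness of the time-integrated lintegral
    have hfin : ∫⁻ t in Set.Ioc (0:ℝ) T, Φ t ∂MeasureTheory.volume ≠ ⊤ := by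
      have hle : ∫⁻ t in Set.Ioc (0:ℝ) T, Φ t ∂MeasureTheory.volume
          ≤ Bnd * MeasureTheory.volume (Set.Ioc (0:ℝ) T) := by
        rw [← setLIntegral_const]
        exact setLIntegral_mono measurable_const fun t ht =>
          hΦbd t (h0T t ⟨le_of_lt ht.1, ht.2⟩)
      refine ne_top_of_le_ne_top ?_ hle
      rw [Real.volume_Ioc]
      finiteness
    -- relate the real integrals to the lintegrals
    have hFgΦ : ∀ t : ℝ, ∫ x, (χ x)^2 * (g (φ (t, x)))^2 ∂μ = (Φ t).toReal := by
      intro t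
      rw [hΦdef]
      exact integral_eq_lintegral_of_nonneg_ae
        (Filter.Eventually.of_forall fun x => mul_nonneg (sq_nonneg _) (sq_nonneg _))
        (((hχ.measurable.pow_const 2).mul
          ((hgm.comp (hφtm t)).pow_const 2)).aestronglyMeasurable)
    have hFuFg : ∀ t ∈ Set.Ioc (0:ℝ) T,
        ∫ x, (χ x)^2 * (u₀ (φ (t, x)))^2 ∂μ = ∫ x, (χ x)^2 * (g (φ (t, x)))^2 ∂μ := by
      intro t ht
      refine integral_congr_ae ((hae t (h0T t ⟨le_of_lt ht.1, ht.2⟩)).mono fun x hx => ?_)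
      exact congrArg (fun a => (χ x)^2 * a^2) hx
    have hreal : ∫ t in (0:ℝ)..T, ∫ x, (χ x)^2 * (u₀ (φ (t, x)))^2 ∂μ
        = (∫⁻ t in Set.Ioc (0:ℝ) T, Φ t ∂MeasureTheory.volume).toReal := by
      rw [intervalIntegral.integral_of_le hT.le]
      rw [setIntegral_congr_fun measurableSet_Ioc fun t ht => hFuFg t ht]
      have : ∀ t ∈ Set.Ioc (0:ℝ) T, ∫ x, (χ x)^2 * (g (φ (t, x)))^2 ∂μ = (Φ t).toReal :=
        fun t _ => hFgΦ t
      rw [setIntegral_congr_fun measurableSet_Ioc this]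
      refine integral_toReal (hΦm.aemeasurable.restrict) ?_
      rw [ae_restrict_iff' measurableSet_Ioc]
      exact Filter.Eventually.of_forall fun t ht =>
        lt_of_le_of_lt (hΦbd t (h0T t ⟨le_of_lt ht.1, ht.2⟩)) (hBndne.lt_top)
    -- conclude
    rw [hEeq, hreal]
    have := ENNReal.toReal_mono hfin hmain
    rw [ENNReal.toReal_mul, ENNReal.toReal_mul, ENNReal.toReal_inv, ENNReal.coe_toReal,
      ENNReal.toReal_ofReal hδ.le, ENNReal.toReal_ofReal hEnn] at this
    calc δ / (c:ℝ) * E = ((c:ℝ))⁻¹ * (δ * E) := by ring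
      _ ≤ _ := this
end

section
/- Let f : ℝⁿ → ℝ be continuously differentiable with ∇f bounded and Lipschitz, and let (φ_t)_{t∈ℝ} denote the globally defined flow of ∇f, i.e. φ_0(x) = x and (d/dt) φ_t(x) = ∇f(φ_t(x)). For x, y ∈ ℝⁿ and t > 0, let U_t(x,y) denote the set of Lipschitz paths γ : [0,t] → ℝⁿ with γ(0) = x and γ(t) = y, and define d_{∇f}(x,y,t) := (1/4) · inf{ ∫₀^t |γ'(s) − ∇f(γ(s))|² ds : γ ∈ U_t(x,y) }. Then for all x, y ∈ ℝⁿ and t > 0: (i) d_{∇f}(x,y,t) ≥ 0; (ii) d_{∇f}(x,y,t) = 0 if and only if y = φ_t(x), that is, if and only if there exists a solution γ of γ'(s) = ∇f(γ(s)) with γ(0) = x and γ(t) = y. -/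
open MeasureTheory

/-- The cost `d_{∇f}(x,y,t)`: infimum of `(1/4)∫₀ᵗ |γ'(s) − ∇f(γ(s))|² ds` over
Lipschitz paths from `x` to `y` in time `t`. -/
noncomputable def dGrad5 (n : ℕ) (f : EuclideanSpace ℝ (Fin n) → ℝ)
    (x y : EuclideanSpace ℝ (Fin n)) (t : ℝ) : ℝ :=
  (1/4) * sInf { I : ℝ | ∃ γ : ℝ → EuclideanSpace ℝ (Fin n),
      (∃ K, LipschitzWith K γ) ∧ γ 0 = x ∧ γ t = y ∧
      I = ∫ s in (0:ℝ)..t, ‖deriv γ s - gradient f (γ s)‖^2 }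

section Helpers
open MeasureTheory intervalIntegral Set Filter Topology NNReal

lemma norm_deriv_le_lip {E : Type*} [NormedAddCommGroup E] [NormedSpace ℝ E] {L : ℝ≥0}
    {γ : ℝ → E} (h : LipschitzWith L γ) (s : ℝ) : ‖deriv γ s‖ ≤ L := by
  by_cases hd : DifferentiableAt ℝ γ s
  · have h2 := norm_fderiv_le_of_lipschitz ℝ h (x₀ := s)
    rw [← fderiv_apply_one_eq_deriv]
    calc ‖fderiv ℝ γ s 1‖ ≤ ‖fderiv ℝ γ s‖ * ‖(1:ℝ)‖ := (fderiv ℝ γ s).le_opNorm 1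
      _ ≤ L := by simpa using h2
  · rw [deriv_zero_of_not_differentiableAt hd]; simp

lemma lipschitz_ftc {n : ℕ} {L : ℝ≥0} {γ : ℝ → EuclideanSpace ℝ (Fin n)}
    (h : LipschitzWith L γ) {a b : ℝ} (hab : a ≤ b) :
    γ b - γ a = ∫ s in a..b, deriv γ s := by
  set δ : ℕ → ℝ := fun k => ((k : ℝ) + 1)⁻¹ with hδ
  have δpos : ∀ k, 0 < δ k := fun k => by positivity
  have δlim : Filter.Tendsto δ atTop (𝓝 0) := tendsto_one_div_add_atTop_nhds_zero_nat.congr (by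
    intro k; simp [hδ, one_div])
  set F : ℕ → ℝ → EuclideanSpace ℝ (Fin n) := fun k s => (δ k)⁻¹ • (γ (s + δ k) - γ s) with hF
  -- slope convergence helper
  have slope_conv : ∀ (g : ℝ → EuclideanSpace ℝ (Fin n)) (u : ℝ) (d : EuclideanSpace ℝ (Fin n)),
      HasDerivAt g d u → Tendsto (fun k => (δ k)⁻¹ • (g (u + δ k) - g u)) atTop (𝓝 d) := by
    intro g u d hg
    rw [hasDerivAt_iff_tendsto_slope] at hg
    have hz : Tendsto (fun k => u + δ k) atTop (𝓝[≠] u) := by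
      refine tendsto_nhdsWithin_iff.2 ⟨?_, ?_⟩
      · simpa using (tendsto_const_nhds.add δlim)
      · exact Eventually.of_forall fun k => by
          simp [ne_eq, add_eq_left]
          exact (δpos k).ne'
    have := hg.comp hz
    refine this.congr fun k => ?_
    simp [slope_def_module, Function.comp]
  have h1 : ∀ᵐ s, Tendsto (fun k => F k s) atTop (𝓝 (deriv γ s)) := by
    filter_upwards [h.ae_differentiableAt] with s hs
    exact slope_conv γ s (deriv γ s) hs.hasDerivAt
  have hFcont : ∀ k, Continuous (F k) := fun k => by
    have := h.continuous
    fun_prop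
  have hbound : ∀ k s, ‖F k s‖ ≤ (L : ℝ) := by
    intro k s
    have : ‖γ (s + δ k) - γ s‖ ≤ L * δ k := by
      have := h.dist_le_mul (s + δ k) s
      rw [dist_eq_norm] at this
      simpa [abs_of_pos (δpos k)] using this
    rw [hF]
    calc ‖(δ k)⁻¹ • (γ (s + δ k) - γ s)‖ = (δ k)⁻¹ * ‖γ (s + δ k) - γ s‖ := by
          rw [norm_smul, Real.norm_eq_abs, abs_of_pos (by positivity)]
      _ ≤ (δ k)⁻¹ * (L * δ k) := by
          exact mul_le_mul_of_nonneg_left this (by positivity)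
      _ = L := by have := (δpos k).ne'; field_simp
  have h2 : Tendsto (fun k => ∫ s in Ioc a b, F k s) atTop
      (𝓝 (∫ s in Ioc a b, deriv γ s)) := by
    refine tendsto_integral_of_dominated_convergence (fun _ => (L : ℝ))
      (fun k => (hFcont k).aestronglyMeasurable.restrict) ?_ ?_ ?_
    · exact (integrableOn_const measure_Ioc_lt_top.ne (by simp))
    · exact fun k => Eventually.of_forall fun s => hbound k s
    · exact ae_restrict_of_ae h1
  -- primitive of γ
  set G : ℝ → EuclideanSpace ℝ (Fin n) := fun u => ∫ v in a..u, γ v with hG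
  have hGd : ∀ u, HasDerivAt G (γ u) u := by
    intro u
    exact intervalIntegral.integral_hasDerivAt_right
      (h.continuous.intervalIntegrable a u)
      (h.continuous.stronglyMeasurableAtFilter _ _)
      h.continuous.continuousAt
  have h3 : ∀ k, ∫ s in a..b, F k s
      = (δ k)⁻¹ • ((G (b + δ k) - G b) - (G (a + δ k) - G a)) := by
    intro k
    have int1 : IntervalIntegrable (fun s => γ (s + δ k)) volume a b :=
      (h.continuous.comp (continuous_id.add continuous_const)).intervalIntegrable a b
    have int2 : IntervalIntegrable γ volume a b := h.continuous.intervalIntegrable a b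
    rw [hF]
    simp only []
    rw [intervalIntegral.integral_smul]
    congr 1
    rw [intervalIntegral.integral_sub int1 int2]
    have e1 : ∫ s in a..b, γ (s + δ k) = ∫ s in (a + δ k)..(b + δ k), γ s :=
      intervalIntegral.integral_comp_add_right γ (δ k)
    have e2 : ∫ s in (a + δ k)..(b + δ k), γ s = G (b + δ k) - G (a + δ k) := by
      have hadd : (∫ s in a..(a + δ k), γ s) + (∫ s in (a + δ k)..(b + δ k), γ s)
          = ∫ s in a..(b + δ k), γ s :=
        intervalIntegral.integral_add_adjacent_intervals
          (h.continuous.intervalIntegrable _ _) (h.continuous.intervalIntegrable _ _)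
      rw [hG]; simp only []
      rw [← hadd]; abel
    have e3 : ∫ s in a..b, γ s = G b - G a := by
      rw [hG]; simp only [intervalIntegral.integral_same, sub_zero]
    rw [e1, e2, e3]; abel
  have h4 : Tendsto (fun k => ∫ s in a..b, F k s) atTop (𝓝 (γ b - γ a)) := by
    have hb := slope_conv G b (γ b) (hGd b)
    have ha := slope_conv G a (γ a) (hGd a)
    have := hb.sub ha
    refine this.congr fun k => ?_
    simp only [h3 k, smul_sub]
  have h5 : Tendsto (fun k => ∫ s in a..b, F k s) atTop (𝓝 (∫ s in a..b, deriv γ s)) := by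
    have : ∀ k, ∫ s in a..b, F k s = ∫ s in Ioc a b, F k s := fun k =>
      intervalIntegral.integral_of_le hab
    rw [intervalIntegral.integral_of_le hab]
    exact h2.congr (fun k => (this k).symm)
  exact tendsto_nhds_unique h4 h5

lemma II_of_bounded {E : Type*} [NormedAddCommGroup E] {h : ℝ → E}
    (hm : AEStronglyMeasurable h (volume : Measure ℝ)) {M : ℝ}
    (hb : ∀ s, ‖h s‖ ≤ M) (a b : ℝ) : IntervalIntegrable h volume a b := by
  rw [intervalIntegrable_iff]
  exact Measure.integrableOn_of_bounded measure_Ioc_lt_top.ne hm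
    (Eventually.of_forall hb)

lemma gronwall_est {n : ℕ} {f : EuclideanSpace ℝ (Fin n) → ℝ}
    {C K : ℝ≥0} (hbdd : ∀ z, ‖gradient f z‖ ≤ (C : ℝ)) (hK : LipschitzWith K (gradient f))
    {φ : ℝ → EuclideanSpace ℝ (Fin n)}
    (hφ : ∀ s, HasDerivAt φ (gradient f (φ s)) s)
    {L : ℝ≥0} {γ : ℝ → EuclideanSpace ℝ (Fin n)} (hγ : LipschitzWith L γ)
    (hinit : γ 0 = φ 0) {t : ℝ} (ht : 0 ≤ t) :
    ‖γ t - φ t‖ ≤ (∫ s in (0:ℝ)..t, ‖deriv γ s - gradient f (γ s)‖) * Real.exp (K * t) := by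
  have gcont : Continuous (gradient f) := hK.continuous
  have φcont : Continuous φ := by
    rw [continuous_iff_continuousAt]; exact fun s => (hφ s).continuousAt
  set e : ℝ → EuclideanSpace ℝ (Fin n) := fun s => γ s - φ s with he
  have econt : Continuous e := hγ.continuous.sub φcont
  set g : ℝ → ℝ := fun s => ‖deriv γ s - gradient f (γ s)‖ with hg
  have hmeas : AEStronglyMeasurable (fun s => deriv γ s - gradient f (γ s))
      (volume : Measure ℝ) :=
    ((stronglyMeasurable_deriv γ).sub
      (gcont.comp hγ.continuous).stronglyMeasurable).aestronglyMeasurable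
  have hgb : ∀ s, ‖deriv γ s - gradient f (γ s)‖ ≤ (L : ℝ) + C := fun s =>
    (norm_sub_le _ _).trans (add_le_add (norm_deriv_le_lip hγ s) (hbdd _))
  have gInt : ∀ a b : ℝ, IntervalIntegrable g volume a b := fun a b =>
    II_of_bounded hmeas.norm (fun s => by
      simpa [hg, Real.norm_eq_abs, abs_of_nonneg (norm_nonneg _)] using hgb s) a b
  set A : ℝ := ∫ s in (0:ℝ)..t, g s with hA
  have hA0 : 0 ≤ A :=
    intervalIntegral.integral_nonneg ht fun s _ => norm_nonneg _
  -- FTC representation of e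
  have gφcont : Continuous (fun u => gradient f (φ u)) := gcont.comp φcont
  have eEq : ∀ s, 0 ≤ s →
      e s = ∫ u in (0:ℝ)..s, (deriv γ u - gradient f (φ u)) := by
    intro s hs
    have h1 : γ s - γ 0 = ∫ u in (0:ℝ)..s, deriv γ u := lipschitz_ftc hγ hs
    have h2 : ∫ u in (0:ℝ)..s, gradient f (φ u) = φ s - φ 0 :=
      intervalIntegral.integral_eq_sub_of_hasDerivAt (fun u _ => hφ u)
        (gφcont.intervalIntegrable _ _)
    have h3 : IntervalIntegrable (fun u => deriv γ u) volume 0 s :=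
      II_of_bounded (stronglyMeasurable_deriv γ).aestronglyMeasurable
        (fun u => norm_deriv_le_lip hγ u) 0 s
    rw [intervalIntegral.integral_sub h3 (gφcont.intervalIntegrable _ _),
      ← h1, h2, he, hinit]
    abel
  set ρ : ℝ → ℝ := fun s => ∫ u in (0:ℝ)..s, ‖e u‖ with hρ
  have hρd : ∀ s, HasDerivAt ρ ‖e s‖ s := fun s =>
    intervalIntegral.integral_hasDerivAt_right (econt.norm.intervalIntegrable _ _)
      (econt.norm.stronglyMeasurableAtFilter _ _) econt.norm.continuousAt
  have hρ0 : ∀ s, 0 ≤ s → 0 ≤ ρ s := fun s hs =>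
    intervalIntegral.integral_nonneg hs fun u _ => norm_nonneg _
  -- key bound
  have key : ∀ s ∈ Icc 0 t, ‖e s‖ ≤ (K : ℝ) * ρ s + A := by
    intro s hs
    have hs0 : (0:ℝ) ≤ s := hs.1
    have step1 : ‖e s‖ ≤ ∫ u in (0:ℝ)..s, ‖deriv γ u - gradient f (φ u)‖ := by
      rw [eEq s hs0]
      exact intervalIntegral.norm_integral_le_integral_norm hs0
    have ptwise : ∀ u, ‖deriv γ u - gradient f (φ u)‖ ≤ g u + (K : ℝ) * ‖e u‖ := by
      intro u
      have : ‖deriv γ u - gradient f (φ u)‖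
          ≤ ‖deriv γ u - gradient f (γ u)‖ + ‖gradient f (γ u) - gradient f (φ u)‖ := by
        have := norm_sub_le_norm_sub_add_norm_sub (deriv γ u) (gradient f (γ u))
          (gradient f (φ u))
        exact this
      refine this.trans (add_le_add le_rfl ?_)
      have := hK.dist_le_mul (γ u) (φ u)
      rw [dist_eq_norm, dist_eq_norm] at this
      exact this
    have int1 : IntervalIntegrable (fun u => ‖deriv γ u - gradient f (φ u)‖) volume 0 s := by
      refine II_of_bounded ?_ (M := (L : ℝ) + C) ?_ 0 s
      · exact ((stronglyMeasurable_deriv γ).sub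
          gφcont.stronglyMeasurable).aestronglyMeasurable.norm
      · intro u
        rw [Real.norm_eq_abs, abs_of_nonneg (norm_nonneg _)]
        exact (norm_sub_le _ _).trans (add_le_add (norm_deriv_le_lip hγ u) (hbdd _))
    have int2 : IntervalIntegrable (fun u => g u + (K : ℝ) * ‖e u‖) volume 0 s :=
      (gInt 0 s).add ((continuous_const.mul econt.norm).intervalIntegrable _ _)
    have step2 : (∫ u in (0:ℝ)..s, ‖deriv γ u - gradient f (φ u)‖)
        ≤ ∫ u in (0:ℝ)..s, (g u + (K : ℝ) * ‖e u‖) :=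
      intervalIntegral.integral_mono_on hs0 int1 int2 fun u _ => ptwise u
    have step3 : (∫ u in (0:ℝ)..s, (g u + (K : ℝ) * ‖e u‖))
        = (∫ u in (0:ℝ)..s, g u) + (K : ℝ) * ρ s := by
      rw [intervalIntegral.integral_add (g := fun u => (K : ℝ) * ‖e u‖) (gInt 0 s)
        ((continuous_const.mul econt.norm).intervalIntegrable _ _),
        intervalIntegral.integral_const_mul]
    have step4 : (∫ u in (0:ℝ)..s, g u) ≤ A :=
      intervalIntegral.integral_mono_interval le_rfl hs0 hs.2
        (Eventually.of_forall fun u => by simpa [hg] using (norm_nonneg (deriv γ u - gradient f (γ u)))) (gInt 0 t)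
    calc ‖e s‖ ≤ _ := step1
      _ ≤ _ := step2
      _ = _ := step3
      _ ≤ (K : ℝ) * ρ s + A := by linarith
  -- Gronwall
  have ρbound := norm_le_gronwallBound_of_norm_deriv_right_le
    (f := ρ) (f' := fun s => ‖e s‖) (δ := 0) (K := (K : ℝ)) (ε := A) (a := 0) (b := t)
    (fun s _ => (hρd s).continuousAt.continuousWithinAt)
    (fun s _ => (hρd s).hasDerivWithinAt)
    (by simp [hρ])
    (fun s hs => by
      rw [Real.norm_eq_abs, Real.norm_eq_abs, abs_of_nonneg (norm_nonneg _),
        abs_of_nonneg (hρ0 s hs.1)]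
      exact key s ⟨hs.1, hs.2.le⟩)
  have hρt : ρ t ≤ gronwallBound 0 (K : ℝ) A t := by
    have := ρbound t ⟨ht, le_rfl⟩
    rwa [Real.norm_eq_abs, abs_of_nonneg (hρ0 t ht), sub_zero] at this
  have final : ‖e t‖ ≤ A * Real.exp ((K : ℝ) * t) := by
    have h1 : ‖e t‖ ≤ (K : ℝ) * ρ t + A := key t ⟨ht, le_rfl⟩
    rcases eq_or_ne ((K : ℝ)) 0 with hK0 | hK0
    · rw [hK0] at h1 ⊢
      simpa using h1.trans (by nlinarith [Real.exp_pos ((0:ℝ) * t), Real.one_le_exp (by simp [mul_nonneg, ht] : (0:ℝ) ≤ 0 * t)])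
    · have hgb2 : gronwallBound 0 (K : ℝ) A t
          = A / (K : ℝ) * (Real.exp ((K : ℝ) * t) - 1) := by
        rw [gronwallBound_of_K_ne_0 hK0]; ring
      have hKpos : (0:ℝ) < K := lt_of_le_of_ne K.coe_nonneg (Ne.symm hK0)
      calc ‖e t‖ ≤ (K : ℝ) * ρ t + A := h1
        _ ≤ (K : ℝ) * (A / (K : ℝ) * (Real.exp ((K : ℝ) * t) - 1)) + A := by
            rw [← hgb2]
            exact add_le_add (mul_le_mul_of_nonneg_left hρt K.coe_nonneg) le_rfl
        _ = A * Real.exp ((K : ℝ) * t) := by field_simp; ring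
  exact final

end Helpers

open Set Filter Topology NNReal intervalIntegral in
/-- Proposition A.4 (Euclidean form): `d_{∇f}(x,y,t) ≥ 0`, with equality if and
only if `y = φ_t(x)`, i.e. iff there is an integral curve of `∇f` from `x` to `y`
in time `t`. -/
theorem stmt5 (n : ℕ) (f : EuclideanSpace ℝ (Fin n) → ℝ)
    (hf : ContDiff ℝ 1 f) (hbdd : ∃ C, ∀ z, ‖gradient f z‖ ≤ C)
    (hlip : ∃ K, LipschitzWith K (gradient f))
    (φ : ℝ → EuclideanSpace ℝ (Fin n) → EuclideanSpace ℝ (Fin n))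
    (hφ0 : ∀ x, φ 0 x = x)
    (hφ : ∀ (t : ℝ) (x : EuclideanSpace ℝ (Fin n)),
      HasDerivAt (fun s => φ s x) (gradient f (φ t x)) t)
    (x y : EuclideanSpace ℝ (Fin n)) (t : ℝ) (ht : 0 < t) :
    0 ≤ dGrad5 n f x y t ∧
    (dGrad5 n f x y t = 0 ↔ y = φ t x) ∧
    (dGrad5 n f x y t = 0 ↔
      ∃ γ : ℝ → EuclideanSpace ℝ (Fin n),
        (∀ s ∈ Set.Icc (0:ℝ) t, HasDerivAt γ (gradient f (γ s)) s) ∧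
        γ 0 = x ∧ γ t = y) := by
  obtain ⟨C₀, hbdd⟩ := hbdd
  obtain ⟨K, hK⟩ := hlip
  set C : ℝ≥0 := ⟨max C₀ 0, le_max_right _ _⟩ with hC
  have hbddC : ∀ z, ‖gradient f z‖ ≤ (C : ℝ) := fun z => (hbdd z).trans (le_max_left _ _)
  set S := { I : ℝ | ∃ γ : ℝ → EuclideanSpace ℝ (Fin n),
      (∃ K, LipschitzWith K γ) ∧ γ 0 = x ∧ γ t = y ∧
      I = ∫ s in (0:ℝ)..t, ‖deriv γ s - gradient f (γ s)‖^2 } with hS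
  have hSdef : dGrad5 n f x y t = (1/4) * sInf S := rfl
  have hSnonneg : ∀ I ∈ S, (0:ℝ) ≤ I := by
    rintro I ⟨γ, hγ, h0, ht', rfl⟩
    exact intervalIntegral.integral_nonneg ht.le fun s _ => by positivity
  have hbdS : BddBelow S := ⟨0, fun I hI => hSnonneg I hI⟩
  have hSne : S.Nonempty := by
    refine ⟨_, fun s => x + (s / t) • (y - x), ⟨‖(1/t) • (y - x)‖₊, ?_⟩, ?_, ?_, rfl⟩
    · refine lipschitzWith_of_nnnorm_deriv_le (fun s => ?_) (fun s => ?_)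
      · exact (((differentiableAt_fun_id).div_const t).smul_const (y - x)).const_add x
      · have hd : HasDerivAt (fun s : ℝ => x + (s / t) • (y - x)) ((1/t) • (y - x)) s := by
          have h1 : HasDerivAt (fun s : ℝ => s / t) (1/t) s := by
            simpa [one_div] using (hasDerivAt_id s).div_const t
          exact (h1.smul_const (y - x)).const_add x
        rw [hd.deriv]
    · simp
    · show x + (t / t) • (y - x) = y
      rw [div_self ht.ne']
      simp
  have hnonneg : 0 ≤ dGrad5 n f x y t := by
    rw [hSdef]
    have := Real.sInf_nonneg (fun I hI => hSnonneg I hI)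
    linarith
  have hφlip : ∀ x0, LipschitzWith C (fun s => φ s x0) := fun x0 =>
    lipschitzWith_of_nnnorm_deriv_le (fun s => (hφ s x0).differentiableAt)
      (fun s => by
        rw [(hφ s x0).deriv, ← NNReal.coe_le_coe, coe_nnnorm]
        exact hbddC _)
  have flow_mem : y = φ t x → (0:ℝ) ∈ S := by
    intro hy
    refine ⟨fun s => φ s x, ⟨C, hφlip x⟩, hφ0 x, hy.symm, ?_⟩
    have hzero : (fun s => ‖deriv (fun s => φ s x) s - gradient f (φ s x)‖^2)
        = fun _ => (0:ℝ) := by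
      funext s
      rw [(hφ s x).deriv]
      simp
    rw [hzero]
    simp
  -- forward (hard) direction
  have forward : dGrad5 n f x y t = 0 → y = φ t x := by
    intro h0
    have hsInf : sInf S = 0 := by
      rw [hSdef] at h0; linarith
    set c : ℝ := (t + 1) * Real.exp ((K : ℝ) * t) with hc
    have hcpos : 0 < c := by positivity
    have main : ∀ ε : ℝ, 0 < ε → ‖y - φ t x‖ ≤ Real.sqrt ε * c := by
      intro ε hε
      have hlt : sInf S < ε := by rw [hsInf]; exact hε
      obtain ⟨I, hIS, hIε⟩ := (csInf_lt_iff hbdS hSne).1 hlt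
      obtain ⟨γ, ⟨L, hγL⟩, hγ0, hγt, hIdef⟩ := hIS
      have hI0 : 0 ≤ I := hSnonneg I ⟨γ, ⟨L, hγL⟩, hγ0, hγt, hIdef⟩
      set lam : ℝ := Real.sqrt ε with hlam
      have hlampos : 0 < lam := Real.sqrt_pos.2 hε
      set g : ℝ → ℝ := fun s => ‖deriv γ s - gradient f (γ s)‖ with hg
      have gcont : Continuous (gradient f) := hK.continuous
      have hmeas : AEStronglyMeasurable (fun s => deriv γ s - gradient f (γ s))
          (volume : Measure ℝ) :=
        ((stronglyMeasurable_deriv γ).sub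
          (gcont.comp hγL.continuous).stronglyMeasurable).aestronglyMeasurable
      have hgb : ∀ s, g s ≤ (L : ℝ) + C := fun s =>
        (norm_sub_le _ _).trans (add_le_add (norm_deriv_le_lip hγL s) (hbddC _))
      have hgnn : ∀ s, 0 ≤ g s := fun s => norm_nonneg _
      have gInt : IntervalIntegrable g volume 0 t :=
        II_of_bounded hmeas.norm (fun s => by
          rw [Real.norm_eq_abs, abs_of_nonneg (hgnn s)]; exact hgb s) 0 t
      have g2Int : IntervalIntegrable (fun s => g s ^ 2) volume 0 t := by
        refine II_of_bounded ((hmeas.norm.aemeasurable.pow_const 2).aestronglyMeasurable)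
          (M := ((L:ℝ) + C) ^ 2) (fun s => ?_) 0 t
        have h1 := hgb s
        have h2 := hgnn s
        rw [Real.norm_eq_abs, abs_of_nonneg (by positivity : (0:ℝ) ≤ g s ^ 2)]
        nlinarith
      set A : ℝ := ∫ s in (0:ℝ)..t, g s with hA
      have hAle : A ≤ lam / 2 * t + I / (2 * lam) := by
        have ptwise : ∀ u, g u ≤ lam / 2 + g u ^ 2 / (2 * lam) := by
          intro u
          have h3 : (0:ℝ) < 2 * lam := by linarith
          rw [div_add_div _ _ (by norm_num : (2:ℝ) ≠ 0) h3.ne', le_div_iff₀ (by positivity)]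
          nlinarith [sq_nonneg (g u - lam)]
        have rhsInt : IntervalIntegrable (fun u => lam / 2 + g u ^ 2 / (2 * lam))
            volume 0 t := by
          apply IntervalIntegrable.add intervalIntegrable_const
          simpa [div_eq_mul_inv, mul_comm] using g2Int.mul_const (2 * lam)⁻¹
        have := intervalIntegral.integral_mono_on ht.le gInt rhsInt fun u _ => ptwise u
        rw [intervalIntegral.integral_add intervalIntegrable_const (by
          simpa [div_eq_mul_inv, mul_comm] using g2Int.mul_const (2 * lam)⁻¹)] at this
        simp only [intervalIntegral.integral_const, smul_eq_mul, sub_zero] at this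
        have hdiv : (∫ u in (0:ℝ)..t, g u ^ 2 / (2 * lam))
            = (∫ u in (0:ℝ)..t, g u ^ 2) / (2 * lam) := by
          simp [div_eq_mul_inv, intervalIntegral.integral_mul_const]
        rw [hdiv, ← hIdef] at this
        calc A ≤ t * (lam / 2) + I / (2 * lam) := this
          _ = lam / 2 * t + I / (2 * lam) := by ring
      have hAle2 : A ≤ lam * (t + 1) := by
        have h1 : I / (2 * lam) ≤ ε / (2 * lam) := by
          gcongr
        have h2 : ε / (2 * lam) = lam / 2 := by
          have : lam * lam = ε := Real.mul_self_sqrt hε.le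
          field_simp [← this]
          rw [← this]; ring
        have : A ≤ lam / 2 * t + lam / 2 := by
          rw [h2] at h1; linarith
        nlinarith
      have est := gronwall_est hbddC hK (fun s => hφ s x) hγL
        (hγ0.trans (hφ0 x).symm) ht.le
      rw [hγt] at est
      calc ‖y - φ t x‖ ≤ A * Real.exp ((K : ℝ) * t) := est
        _ ≤ lam * (t + 1) * Real.exp ((K : ℝ) * t) := by
            have := Real.exp_pos ((K : ℝ) * t)
            nlinarith
        _ = Real.sqrt ε * c := by rw [hc, hlam]; ring
    have hle0 : ‖y - φ t x‖ ≤ 0 := by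
      refine le_of_forall_pos_le_add fun δ hδ => ?_
      have hm := main ((δ / c) ^ 2) (by positivity)
      rw [Real.sqrt_sq (by positivity : (0:ℝ) ≤ δ / c),
        div_mul_cancel₀ _ hcpos.ne'] at hm
      linarith
    have : y - φ t x = 0 := norm_le_zero_iff.1 hle0
    exact sub_eq_zero.1 this
  have iff2 : dGrad5 n f x y t = 0 ↔ y = φ t x := by
    constructor
    · exact forward
    · intro hy
      rw [hSdef]
      have h1 : sInf S ≤ 0 := csInf_le hbdS (flow_mem hy)
      have h2 : 0 ≤ sInf S := Real.sInf_nonneg (fun I hI => hSnonneg I hI)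
      rw [le_antisymm h1 h2]
      ring
  refine ⟨hnonneg, iff2, ?_⟩
  rw [iff2]
  constructor
  · intro hy
    exact ⟨fun s => φ s x, fun s _ => hφ s x, hφ0 x, hy.symm⟩
  · rintro ⟨γ, hγ', hγ0, hγt⟩
    have huniq : Set.EqOn γ (fun s => φ s x) (Set.Icc 0 t) := by
      apply ODE_solution_unique (v := fun _ z => gradient f z) (K := K) (fun _ => hK)
      · exact fun s hs => (hγ' s hs).continuousAt.continuousWithinAt
      · exact fun s hs => (hγ' s (Set.Ico_subset_Icc_self hs)).hasDerivWithinAt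
      · exact fun s _ => (hφ s x).continuousAt.continuousWithinAt
      · exact fun s _ => (hφ s x).hasDerivWithinAt
      · rw [hγ0, hφ0]
    have hval := huniq ⟨ht.le, le_rfl⟩
    rw [← hγt]
    exact hval
end

section
/- Let M be a compact metric space and ν a finite Borel measure on M with full support (every nonempty open set has positive ν-measure). Let T > 0, s ∈ (0,T], C₀ > 0; let K : M × M × (0,T] → [0,∞) be continuous with sup{ ∫_M K(x,y,t) dν(x) : y ∈ M, t ∈ (0,T] } < ∞; and let w₁ : [0,T] × M → [0,∞) and w₂ : M → [0,∞) be continuous. Define O_T(y) := ∫₀^T ∫_M w₁(t,x) K(x,y,t) dν(x) dt and I_s(y) := ∫_M w₂(x) K(x,y,s) dν(x). Then the following are equivalent: (1) for every finite nonnegative Borel measure μ on M, ∫_M w₂(x) (∫_M K(x,y,s) dμ(y)) dν(x) ≤ C₀ ∫₀^T ∫_M w₁(t,x) (∫_M K(x,y,t) dμ(y)) dν(x) dt; (2) the same inequality holds for every μ of the form dμ = u₀ dν with u₀ ∈ L¹(ν) nonnegative; (3) the same inequality holds for every Dirac mass μ = δ_y, y ∈ M; (4) I_s(y) ≤ C₀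 O_T(y) for every y ∈ M. -/
open MeasureTheory Set
open scoped NNReal ENNReal

section AuxPropFiveFour

variable {M : Type*} [MetricSpace M] [CompactSpace M] [MeasurableSpace M] [BorelSpace M]

/-- A continuous real function on a compact space is bounded. -/
lemma auxPFF_bound {α : Type*} [TopologicalSpace α] [CompactSpace α] {f : α → ℝ}
    (hf : Continuous f) : ∃ C : ℝ, 0 ≤ C ∧ ∀ x, ‖f x‖ ≤ C := by
  obtain ⟨C, hC⟩ := isCompact_univ.exists_bound_of_continuousOn hf.continuousOn
  exact ⟨max C 0, le_max_right _ _, fun x => (hC x (mem_univ x)).trans (le_max_left _ _)⟩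

/-- A continuous real function on a compact space is integrable w.r.t. any finite measure. -/
lemma auxPFF_integrable {α : Type*} [TopologicalSpace α] [CompactSpace α]
    [MeasurableSpace α] [OpensMeasurableSpace α] (μ : Measure α) [IsFiniteMeasure μ]
    {f : α → ℝ} (hf : Continuous f) : Integrable f μ :=
  hf.integrable_of_hasCompactSupport (HasCompactSupport.of_compactSpace f)

/-- Fubini swap for continuous kernels on a compact space. -/
lemma auxPFF_swap (ν μ : Measure M) [IsFiniteMeasure ν] [IsFiniteMeasure μ]
    {k : M → M → ℝ} (hk : Continuous fun p : M × M => k p.1 p.2)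
    {w : M → ℝ} (hw : Continuous w) :
    (∫ x, w x * ∫ y, k x y ∂μ ∂ν) = ∫ y, ∫ x, w x * k x y ∂ν ∂μ := by
  have h : ∀ x, w x * ∫ y, k x y ∂μ = ∫ y, w x * k x y ∂μ := fun x =>
    (integral_const_mul _ _).symm
  simp_rw [h]
  exact integral_integral_swap
    (auxPFF_integrable (ν.prod μ) ((hw.comp continuous_fst).mul hk))

/-- Continuity of a parametric integral of a continuous kernel on a compact space. -/
lemma auxPFF_cont (ν : Measure M) [IsFiniteMeasure ν] {k : M → M → ℝ}
    (hk : Continuous fun p : M × M => k p.1 p.2) {w : M → ℝ} (hw : Continuous w) :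
    Continuous fun y => ∫ x, w x * k x y ∂ν := by
  obtain ⟨C, hC0, hC⟩ := auxPFF_bound ((hw.comp continuous_fst).mul hk)
  refine continuous_of_dominated (fun y => ?_) (fun y => ?_) (integrable_const C) ?_
  · exact (hw.mul (hk.comp (continuous_id.prodMk continuous_const))).aestronglyMeasurable
  · exact Filter.Eventually.of_forall fun x => hC (x, y)
  · exact Filter.Eventually.of_forall fun x =>
      continuous_const.mul (hk.comp (continuous_const.prodMk continuous_id))

end AuxPropFiveFour

/-- Proposition 5.4: for a nonnegative continuous kernel `K` on a compact metric
space with a finite fully supported reference measure `ν`, weighted `L¹`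
observability of all nonnegative solutions (i.e. of `S(t)μ(x) = ∫ K(x,y,t) dμ(y)`)
is equivalent for general nonnegative finite measures, for `L¹` densities, for
Dirac masses, and to the pointwise observability of the kernel. -/
theorem stmt7 {M : Type*} [MetricSpace M] [CompactSpace M]
    [MeasurableSpace M] [BorelSpace M]
    (ν : Measure M) [IsFiniteMeasure ν]
    (hsupp : ∀ U : Set M, IsOpen U → U.Nonempty → 0 < ν U)
    (T s C₀ : ℝ) (hT : 0 < T) (hs : s ∈ Set.Ioc 0 T) (hC₀ : 0 < C₀)
    (K : M → M → ℝ → ℝ)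
    (hK0 : ∀ x y : M, ∀ t ∈ Set.Ioc (0:ℝ) T, 0 ≤ K x y t)
    (hKc : ContinuousOn (fun p : M × M × ℝ => K p.1 p.2.1 p.2.2)
      (Set.univ ×ˢ Set.univ ×ˢ Set.Ioc 0 T))
    (hKsup : ∃ B : ℝ, ∀ y : M, ∀ t ∈ Set.Ioc (0:ℝ) T, (∫ x, K x y t ∂ν) ≤ B)
    (w₁ : ℝ × M → ℝ)
    (hw₁c : ContinuousOn w₁ (Set.Icc 0 T ×ˢ (Set.univ : Set M)))
    (hw₁0 : ∀ t ∈ Set.Icc (0:ℝ) T, ∀ x : M, 0 ≤ w₁ (t, x))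
    (w₂ : M → ℝ) (hw₂c : Continuous w₂) (hw₂0 : ∀ x, 0 ≤ w₂ x) :
    [ (∀ μ : Measure M, IsFiniteMeasure μ →
        (∫ x, w₂ x * (∫ y, K x y s ∂μ) ∂ν) ≤
          C₀ * ∫ t in (0:ℝ)..T, ∫ x, w₁ (t, x) * (∫ y, K x y t ∂μ) ∂ν),
      (∀ u₀ : M → ℝ, Integrable u₀ ν → (∀ y, 0 ≤ u₀ y) →
        (∫ x, w₂ x * (∫ y, K x y s * u₀ y ∂ν) ∂ν) ≤
          C₀ * ∫ t in (0:ℝ)..T, ∫ x, w₁ (t, x) * (∫ y, K x y t * u₀ y ∂ν) ∂ν),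
      (∀ y₀ : M,
        (∫ x, w₂ x * (∫ y, K x y s ∂(Measure.dirac y₀)) ∂ν) ≤
          C₀ * ∫ t in (0:ℝ)..T, ∫ x, w₁ (t, x) * (∫ y, K x y t ∂(Measure.dirac y₀)) ∂ν),
      (∀ y₀ : M,
        (∫ x, w₂ x * K x y₀ s ∂ν) ≤
          C₀ * ∫ t in (0:ℝ)..T, ∫ x, w₁ (t, x) * K x y₀ t ∂ν) ].TFAE := by
  rcases isEmpty_or_nonempty M with hM | hM
  · -- trivial case : `M` is empty
    have h1 : (∀ μ : Measure M, IsFiniteMeasure μ →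
        (∫ x, w₂ x * (∫ y, K x y s ∂μ) ∂ν) ≤
          C₀ * ∫ t in (0:ℝ)..T, ∫ x, w₁ (t, x) * (∫ y, K x y t ∂μ) ∂ν) := by
      intro μ _; simp [integral_of_isEmpty]
    have h2 : (∀ u₀ : M → ℝ, Integrable u₀ ν → (∀ y, 0 ≤ u₀ y) →
        (∫ x, w₂ x * (∫ y, K x y s * u₀ y ∂ν) ∂ν) ≤
          C₀ * ∫ t in (0:ℝ)..T, ∫ x, w₁ (t, x) * (∫ y, K x y t * u₀ y ∂ν) ∂ν) := by
      intro u₀ _ _; simp [integral_of_isEmpty]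
    have h3 : (∀ y₀ : M,
        (∫ x, w₂ x * (∫ y, K x y s ∂(Measure.dirac y₀)) ∂ν) ≤
          C₀ * ∫ t in (0:ℝ)..T, ∫ x, w₁ (t, x) * (∫ y, K x y t ∂(Measure.dirac y₀)) ∂ν) :=
      fun y₀ => (IsEmpty.false y₀).elim
    have h4 : (∀ y₀ : M,
        (∫ x, w₂ x * K x y₀ s ∂ν) ≤
          C₀ * ∫ t in (0:ℝ)..T, ∫ x, w₁ (t, x) * K x y₀ t ∂ν) :=
      fun y₀ => (IsEmpty.false y₀).elim
    tfae_have 1 → 2 := fun _ => h2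
    tfae_have 2 → 3 := fun _ => h3
    tfae_have 3 → 4 := fun _ => h4
    tfae_have 4 → 1 := fun _ => h1
    tfae_finish
  -- main case : `M` is nonempty
  obtain ⟨B, hB⟩ := hKsup
  obtain ⟨ystar⟩ := hM
  have hB0 : 0 ≤ B := le_trans (integral_nonneg fun x => hK0 x ystar s hs) (hB ystar s hs)
  -- continuity of time-slices of `K`
  have hKt : ∀ t ∈ Set.Ioc (0:ℝ) T, Continuous fun p : M × M => K p.1 p.2 t := by
    intro t ht
    have h : ContinuousOn ((fun p : M × M × ℝ => K p.1 p.2.1 p.2.2) ∘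
        (fun q : M × M => (q.1, q.2, t))) univ := by
      refine hKc.comp ?_ ?_
      · exact (continuous_fst.prodMk (continuous_snd.prodMk continuous_const)).continuousOn
      · exact fun q _ => ⟨mem_univ _, mem_univ _, ht⟩
    exact continuousOn_univ.mp h
  -- local uniform bounds on `K`
  have hKb : ∀ a : ℝ, 0 < a → ∃ C : ℝ, 0 ≤ C ∧ ∀ (x y : M), ∀ t ∈ Set.Icc a T,
      ‖K x y t‖ ≤ C := by
    intro a ha
    have hsub : (univ ×ˢ univ ×ˢ Icc a T : Set (M × M × ℝ)) ⊆
        univ ×ˢ univ ×ˢ Ioc 0 T := by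
      rintro ⟨x, y, t⟩ ⟨-, -, h1, h2⟩
      exact ⟨mem_univ _, mem_univ _, lt_of_lt_of_le ha h1, h2⟩
    obtain ⟨C, hC⟩ :=
      (isCompact_univ.prod (isCompact_univ.prod isCompact_Icc)).exists_bound_of_continuousOn
        (hKc.mono hsub)
    refine ⟨max C 0, le_max_right _ _, fun x y t ht => ?_⟩
    exact le_trans (hC (x, y, t) ⟨mem_univ _, mem_univ _, ht⟩) (le_max_left _ _)
  -- continuity of time-slices of `w₁` and global bound
  have hw₁t : ∀ t ∈ Set.Icc (0:ℝ) T, Continuous fun x => w₁ (t, x) := by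
    intro t ht
    have h : ContinuousOn (w₁ ∘ (fun x : M => ((t : ℝ), x))) univ := by
      refine hw₁c.comp (continuous_const.prodMk continuous_id).continuousOn ?_
      exact fun x _ => ⟨ht, mem_univ _⟩
    exact continuousOn_univ.mp h
  obtain ⟨C₁, hC₁0, hC₁⟩ : ∃ C : ℝ, 0 ≤ C ∧ ∀ t ∈ Set.Icc (0:ℝ) T, ∀ x : M,
      ‖w₁ (t, x)‖ ≤ C := by
    obtain ⟨C, hC⟩ := (isCompact_Icc.prod isCompact_univ).exists_bound_of_continuousOn hw₁c
    exact ⟨max C 0, le_max_right _ _, fun t ht x =>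
      le_trans (hC (t, x) ⟨ht, mem_univ _⟩) (le_max_left _ _)⟩
  -- continuity of `(t, y) ↦ ∫ x, w₁ (t, x) * K x y t ∂ν` on `Ioc 0 T ×ˢ univ`
  have hGc : ContinuousOn (fun p : ℝ × M => ∫ x, w₁ (p.1, x) * K x p.2 p.1 ∂ν)
      (Set.Ioc 0 T ×ˢ (univ : Set M)) := by
    rintro ⟨t₀, y₀⟩ hp
    have ht₀ : t₀ ∈ Set.Ioc (0:ℝ) T := hp.1
    obtain ⟨C, hC0, hC⟩ := hKb (t₀ / 2) (by linarith [ht₀.1])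
    have hmem : ∀ᶠ q : ℝ × M in nhdsWithin (t₀, y₀) (Set.Ioc 0 T ×ˢ univ),
        q ∈ (Set.Ioc 0 T ×ˢ (univ : Set M)) := eventually_mem_nhdsWithin
    have hhalf : ∀ᶠ q : ℝ × M in nhdsWithin (t₀, y₀) (Set.Ioc 0 T ×ˢ univ),
        t₀ / 2 < q.1 := by
      apply Filter.Eventually.filter_mono nhdsWithin_le_nhds
      exact (continuous_fst.continuousAt (x := ((t₀, y₀) : ℝ × M))).eventually
        (eventually_gt_nhds (by linarith [ht₀.1]))
    refine continuousWithinAt_of_dominated (F := fun (q : ℝ × M) (x : M) =>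
        w₁ (q.1, x) * K x q.2 q.1) (bound := fun _ => C₁ * C) ?_ ?_ (integrable_const _) ?_
    · filter_upwards [hmem] with q hq
      exact ((hw₁t q.1 (Ioc_subset_Icc_self hq.1)).mul
        ((hKt q.1 hq.1).comp (continuous_id.prodMk continuous_const))).aestronglyMeasurable
    · filter_upwards [hmem, hhalf] with q hq hq2
      refine Filter.Eventually.of_forall fun x => ?_
      rw [norm_mul]
      exact mul_le_mul (hC₁ q.1 (Ioc_subset_Icc_self hq.1) x)
        (hC x q.2 q.1 ⟨le_of_lt hq2, hq.1.2⟩) (norm_nonneg _) hC₁0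
    · refine Filter.Eventually.of_forall fun x => ?_
      have hcw : ContinuousWithinAt (fun q : ℝ × M => w₁ (q.1, x))
          (Set.Ioc 0 T ×ˢ univ) (t₀, y₀) := by
        refine (hw₁c.comp (continuous_fst.prodMk continuous_const).continuousOn
          ?_).continuousWithinAt hp
        exact fun q hq => ⟨Ioc_subset_Icc_self hq.1, mem_univ _⟩
      have hck : ContinuousWithinAt (fun q : ℝ × M => K x q.2 q.1)
          (Set.Ioc 0 T ×ˢ univ) (t₀, y₀) := by
        refine (hKc.comp (continuous_const.prodMk
          (continuous_snd.prodMk continuous_fst)).continuousOn ?_).continuousWithinAt hp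
        exact fun q hq => ⟨mem_univ _, mem_univ _, hq.1⟩
      exact hcw.mul hck
  -- uniform bound on the inner space integral
  have hGbound : ∀ (y : M), ∀ t ∈ Set.Ioc (0:ℝ) T,
      ‖∫ x, w₁ (t, x) * K x y t ∂ν‖ ≤ C₁ * B := by
    intro y t ht
    have hcont1 : Continuous fun x => w₁ (t, x) * K x y t :=
      (hw₁t t (Ioc_subset_Icc_self ht)).mul
        ((hKt t ht).comp (continuous_id.prodMk continuous_const))
    have hcont2 : Continuous fun x => K x y t :=
      (hKt t ht).comp (continuous_id.prodMk continuous_const)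
    calc ‖∫ x, w₁ (t, x) * K x y t ∂ν‖
        ≤ ∫ x, ‖w₁ (t, x) * K x y t‖ ∂ν := norm_integral_le_integral_norm _
      _ ≤ ∫ x, C₁ * K x y t ∂ν := by
          refine integral_mono (auxPFF_integrable ν hcont1).norm
            ((auxPFF_integrable ν hcont2).const_mul C₁) fun x => ?_
          rw [norm_mul, Real.norm_of_nonneg (hK0 x y t ht)]
          exact mul_le_mul_of_nonneg_right (hC₁ t (Ioc_subset_Icc_self ht) x)
            (hK0 x y t ht)
      _ = C₁ * ∫ x, K x y t ∂ν := integral_const_mul _ _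
      _ ≤ C₁ * B := mul_le_mul_of_nonneg_left (hB y t ht) hC₁0
  haveI hfinIoc : IsFiniteMeasure (volume.restrict (Set.Ioc (0:ℝ) T)) := by
    constructor
    rw [Measure.restrict_apply_univ]
    simp [Real.volume_Ioc]
  -- continuity of `O_T`
  have hOTc : Continuous fun y : M => ∫ t in Set.Ioc (0:ℝ) T,
      (∫ x, w₁ (t, x) * K x y t ∂ν) := by
    refine continuous_of_dominated (bound := fun _ => C₁ * B) (fun y => ?_) (fun y => ?_)
      (integrable_const _) ?_
    · refine ContinuousOn.aestronglyMeasurable ?_ measurableSet_Ioc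
      refine (hGc.comp (continuous_id.prodMk continuous_const).continuousOn ?_)
      exact fun t ht => ⟨ht, mem_univ _⟩
    · filter_upwards [ae_restrict_mem measurableSet_Ioc] with t ht
      exact hGbound y t ht
    · filter_upwards [ae_restrict_mem measurableSet_Ioc] with t ht
      have h : ContinuousOn (fun y : M => ∫ x, w₁ (t, x) * K x y t ∂ν) univ := by
        refine hGc.comp (continuous_const.prodMk continuous_id).continuousOn ?_
        exact fun y _ => ⟨ht, mem_univ _⟩
      exact continuousOn_univ.mp h
  -- continuity of `I_s`
  have hIsc : Continuous fun y : M => ∫ x, w₂ x * K x y s ∂ν :=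
    auxPFF_cont ν (hKt s hs) hw₂c
  -- continuity of `O_T` in interval-integral form
  have hOTeq : (fun y : M => ∫ t in (0:ℝ)..T, ∫ x, w₁ (t, x) * K x y t ∂ν) =
      fun y : M => ∫ t in Set.Ioc (0:ℝ) T, (∫ x, w₁ (t, x) * K x y t ∂ν) := by
    funext y; exact intervalIntegral.integral_of_le hT.le
  have hOTc' : Continuous fun y : M => ∫ t in (0:ℝ)..T, ∫ x, w₁ (t, x) * K x y t ∂ν := by
    rw [hOTeq]; exact hOTc
  -- the key Fubini computation for an arbitrary finite measure μ
  have hKey : ∀ μ : Measure M, IsFiniteMeasure μ →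
      ((∫ x, w₂ x * (∫ y, K x y s ∂μ) ∂ν) = ∫ y, (∫ x, w₂ x * K x y s ∂ν) ∂μ) ∧
      ((∫ t in (0:ℝ)..T, ∫ x, w₁ (t, x) * (∫ y, K x y t ∂μ) ∂ν) =
        ∫ y, (∫ t in (0:ℝ)..T, ∫ x, w₁ (t, x) * K x y t ∂ν) ∂μ) := by
    intro μ hμ
    haveI := hμ
    constructor
    · exact auxPFF_swap ν μ (hKt s hs) hw₂c
    · rw [intervalIntegral.integral_of_le hT.le]
      have step1 : (∫ t in Set.Ioc (0:ℝ) T, ∫ x, w₁ (t, x) * (∫ y, K x y t ∂μ) ∂ν) =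
          ∫ t in Set.Ioc (0:ℝ) T, (∫ y, (∫ x, w₁ (t, x) * K x y t ∂ν) ∂μ) := by
        refine setIntegral_congr_fun measurableSet_Ioc fun t ht => ?_
        exact auxPFF_swap ν μ (hKt t ht) (hw₁t t (Ioc_subset_Icc_self ht))
      rw [step1]
      -- swap the `t` and `y` integrals
      have hswap : (∫ t in Set.Ioc (0:ℝ) T, (∫ y, (∫ x, w₁ (t, x) * K x y t ∂ν) ∂μ)) =
          ∫ y, (∫ t in Set.Ioc (0:ℝ) T, (∫ x, w₁ (t, x) * K x y t ∂ν)) ∂μ := by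
        apply integral_integral_swap
        have hprod : (volume.restrict (Set.Ioc (0:ℝ) T)).prod μ =
            (volume.prod μ).restrict (Set.Ioc (0:ℝ) T ×ˢ univ) := by
          rw [← Measure.prod_restrict, Measure.restrict_univ]
        constructor
        · rw [hprod]
          exact hGc.aestronglyMeasurable (measurableSet_Ioc.prod MeasurableSet.univ)
        · have hae : ∀ᵐ p : ℝ × M ∂((volume.restrict (Set.Ioc (0:ℝ) T)).prod μ),
              p.1 ∈ Set.Ioc (0:ℝ) T := by
            rw [hprod]
            exact (ae_restrict_mem (measurableSet_Ioc.prod MeasurableSet.univ)).mono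
              fun p hp => hp.1
          refine HasFiniteIntegral.mono' (hasFiniteIntegral_const (C₁ * B)) ?_
          exact hae.mono fun p hp => hGbound p.2 p.1 hp
      rw [hswap]
      simp_rw [← intervalIntegral.integral_of_le hT.le]
  tfae_have 1 → 2 := by
    intro h1 u₀ hu₀ hu₀0
    set f : M → ℝ≥0 := fun y => (u₀ y).toNNReal with hf
    have hfmeas : AEMeasurable f ν :=
      measurable_real_toNNReal.comp_aemeasurable hu₀.aemeasurable
    set μ : Measure M := ν.withDensity fun y => ((f y : ℝ≥0) : ℝ≥0∞) with hμdef
    haveI hμfin : IsFiniteMeasure μ := by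
      refine isFiniteMeasure_withDensity ?_
      have hle : (∫⁻ y, ((f y : ℝ≥0) : ℝ≥0∞) ∂ν) ≤ ∫⁻ y, ‖u₀ y‖₊ ∂ν := by
        refine lintegral_mono fun y => ?_
        rw [hf]
        simp only [ENNReal.coe_le_coe]
        exact le_of_eq (Real.toNNReal_eq_nnnorm_of_nonneg (hu₀0 y))
      exact ne_top_of_le_ne_top hu₀.2.ne hle
    have hμint : ∀ (x : M) (t : ℝ), (∫ y, K x y t ∂μ) = ∫ y, K x y t * u₀ y ∂ν := by
      intro x t
      rw [hμdef, integral_withDensity_eq_integral_smul₀ hfmeas]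
      refine integral_congr_ae (Filter.Eventually.of_forall fun y => ?_)
      rw [hf]
      simp only [NNReal.smul_def, smul_eq_mul, Real.coe_toNNReal _ (hu₀0 y)]
      ring
    have h := h1 μ hμfin
    simp_rw [hμint] at h
    exact h
  tfae_have 2 → 4 := by
    intro h2
    by_contra hc
    push_neg at hc
    obtain ⟨y₀, hy₀⟩ := hc
    set φ : M → ℝ := fun y => (∫ x, w₂ x * K x y s ∂ν) -
      C₀ * ∫ t in (0:ℝ)..T, ∫ x, w₁ (t, x) * K x y t ∂ν with hφ
    have hφc : Continuous φ := hIsc.sub (continuous_const.mul hOTc')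
    have hε : 0 < φ y₀ := sub_pos.mpr hy₀
    set U : Set M := φ ⁻¹' (Set.Ioi (φ y₀ / 2)) with hU
    have hUopen : IsOpen U := isOpen_Ioi.preimage hφc
    have hUmeas : MeasurableSet U := hUopen.measurableSet
    have hy₀U : y₀ ∈ U := by
      simp only [hU, mem_preimage, mem_Ioi]
      linarith
    have hνU : 0 < ν U := hsupp U hUopen ⟨y₀, hy₀U⟩
    set u₀ : M → ℝ := U.indicator fun _ => (1:ℝ) with hu₀def
    have hu₀int : Integrable u₀ ν := (integrable_const (1:ℝ)).indicator hUmeas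
    have hu₀0 : ∀ y, 0 ≤ u₀ y := fun y =>
      Set.indicator_nonneg (fun _ _ => zero_le_one) y
    have h := h2 u₀ hu₀int hu₀0
    have hconv : ∀ (x : M) (t : ℝ),
        (∫ y, K x y t * u₀ y ∂ν) = ∫ y, K x y t ∂(ν.restrict U) := by
      intro x t
      rw [← integral_indicator hUmeas]
      congr 1
      funext y
      by_cases hy : y ∈ U
      · simp [hu₀def, Set.indicator_of_mem hy]
      · simp [hu₀def, Set.indicator_of_notMem hy]
    simp_rw [hconv] at h
    haveI : IsFiniteMeasure (ν.restrict U) := by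
      constructor
      rw [Measure.restrict_apply_univ]
      exact (measure_lt_top ν U)
    obtain ⟨e1, e2⟩ := hKey (ν.restrict U) inferInstance
    rw [e1, e2] at h
    -- h : ∫ Is d(ν|U) ≤ C₀ * ∫ OT d(ν|U)
    have hIsint : Integrable (fun y => ∫ x, w₂ x * K x y s ∂ν) (ν.restrict U) :=
      auxPFF_integrable _ hIsc
    have hOTint : Integrable
        (fun y => ∫ t in (0:ℝ)..T, ∫ x, w₁ (t, x) * K x y t ∂ν) (ν.restrict U) :=
      auxPFF_integrable _ hOTc'
    have hφle : (∫ y in U, φ y ∂ν) ≤ 0 := by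
      have : (∫ y in U, φ y ∂ν) = (∫ y, (∫ x, w₂ x * K x y s ∂ν) ∂(ν.restrict U)) -
          C₀ * ∫ y, (∫ t in (0:ℝ)..T, ∫ x, w₁ (t, x) * K x y t ∂ν) ∂(ν.restrict U) := by
        rw [hφ, ← integral_const_mul]
        exact integral_sub hIsint (hOTint.const_mul C₀)
      rw [this]
      linarith
    have hφge : φ y₀ / 2 * (ν U).toReal ≤ ∫ y in U, φ y ∂ν := by
      refine setIntegral_ge_of_const_le_real hUmeas (measure_ne_top ν U) ?_
        (auxPFF_integrable ν hφc).integrableOn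
      intro y hy
      exact le_of_lt hy
    have hpos : 0 < φ y₀ / 2 * (ν U).toReal := by
      apply mul_pos (by linarith)
      exact ENNReal.toReal_pos hνU.ne' (measure_ne_top ν U)
    linarith
  tfae_have 4 → 1 := by
    intro h4 μ hμ
    haveI := hμ
    obtain ⟨e1, e2⟩ := hKey μ hμ
    rw [e1, e2, ← integral_const_mul]
    refine integral_mono (auxPFF_integrable μ hIsc) ((auxPFF_integrable μ hOTc').const_mul C₀)
      fun y => h4 y
  tfae_have 1 → 3 := by
    intro h1 y₀
    exact h1 (Measure.dirac y₀) inferInstance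
  tfae_have 3 → 4 := by
    intro h3 y₀
    have h := h3 y₀
    simpa only [integral_dirac] using h
  tfae_finish
end

section
/- Let H and K be real Hilbert spaces, L : H → H and O : H → K bounded linear operators, and C > 0. Let 𝒱 ⊆ H be a closed convex set with 0 ∈ 𝒱, and let 𝒱̃ ⊆ 𝒱 be a subset such that u + v ∈ 𝒱 for every u ∈ 𝒱̃ and every v ∈ 𝒱. Assume the observability inequality ‖L u‖_H ≤ C ‖O u‖_K holds for all u ∈ 𝒱. Then for every y₀ ∈ H there exists h ∈ K with ‖h‖_K ≤ C ‖y₀‖_H such that ⟨L* y₀ + O* h, u₀⟩_H ≥ 0 for every u₀ ∈ 𝒱̃. -/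
open scoped RealInnerProductSpace

set_option maxHeartbeats 1000000 in
/-- Lemma 5.8 (abstract form): an observability inequality on a closed convex cone-like
set `𝒱` yields, for every `y₀`, a control `h` of norm at most `C‖y₀‖` such that
`L*y₀ + O*h` has nonnegative inner product with every element of `𝒱̃`. -/
theorem stmt8 {H K : Type*}
    [NormedAddCommGroup H] [InnerProductSpace ℝ H] [CompleteSpace H]
    [NormedAddCommGroup K] [InnerProductSpace ℝ K] [CompleteSpace K]
    (L : H →L[ℝ] H) (O : H →L[ℝ] K) (C : ℝ) (hC : 0 < C)
    (V : Set H) (hVclosed : IsClosed V) (hVconv : Convex ℝ V) (hV0 : (0:H) ∈ V)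
    (Vt : Set H) (hVtV : Vt ⊆ V) (hVt : ∀ u ∈ Vt, ∀ v ∈ V, u + v ∈ V)
    (hobs : ∀ u ∈ V, ‖L u‖ ≤ C * ‖O u‖) :
    ∀ y₀ : H, ∃ h : K, ‖h‖ ≤ C * ‖y₀‖ ∧
      ∀ u₀ ∈ Vt, 0 ≤ ⟪L.adjoint y₀ + O.adjoint h, u₀⟫ := by
  intro y₀
  rcases Set.eq_empty_or_nonempty Vt with hVe | ⟨u₁, hu₁⟩
  · refine ⟨0, by simpa using mul_nonneg hC.le (norm_nonneg y₀), ?_⟩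
    intro u₀ hu₀
    simp [hVe] at hu₀
  set R : ℝ := C * ‖y₀‖ with hRdef
  have hR0 : 0 ≤ R := mul_nonneg hC.le (norm_nonneg _)
  -- natural multiples of elements of Vt are in V
  have hnat : ∀ u₀ ∈ Vt, ∀ n : ℕ, (n : ℝ) • u₀ ∈ V := by
    intro u₀ hu₀ n
    induction n with
    | zero => simpa using hV0
    | succ n ih =>
      have h1 : ((n : ℝ) + 1) • u₀ = u₀ + (n : ℝ) • u₀ := by
        rw [add_smul, one_smul, add_comm]
      push_cast
      rw [h1]
      exact hVt u₀ hu₀ _ ih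
  -- nonnegative multiples of elements of Vt are in V
  have hscale : ∀ c : ℝ, 0 ≤ c → ∀ u₀ ∈ Vt, c • u₀ ∈ V := by
    intro c hc u₀ hu₀
    rcases eq_or_lt_of_le hc with rfl | hc'
    · simpa using hV0
    obtain ⟨n, hn⟩ := exists_nat_ge c
    have hn0 : (0 : ℝ) < n := lt_of_lt_of_le hc' hn
    have hrepr : c • u₀ = (c / n) • ((n : ℝ) • u₀) + (1 - c / n) • (0 : H) := by
      rw [smul_zero, add_zero, smul_smul, div_mul_cancel₀ _ (ne_of_gt hn0)]
    rw [hrepr]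
    exact hVconv (hnat u₀ hu₀ n) hV0 (by positivity)
      (by
        have : c / n ≤ 1 := (div_le_one hn0).2 hn
        linarith)
      (by ring)
  -- the linear test map
  set T : H →L[ℝ] K × ℝ := O.prod ((innerSL ℝ y₀).comp L) with hTdef
  set S' : Set H := {x | ∃ c : ℝ, 0 ≤ c ∧ ∃ u₀ ∈ Vt, x = c • u₀} with hS'def
  have hS'V : S' ⊆ V := by
    rintro x ⟨c, hc, u₀, hu₀, rfl⟩
    exact hscale c hc u₀ hu₀
  have hhullV : convexHull ℝ S' ⊆ V := convexHull_min hS'V hVconv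
  set A : Set (K × ℝ) := T '' (convexHull ℝ S') with hAdef
  set U : Set (K × ℝ) := {p | p.2 + R * ‖p.1‖ < 0} with hUdef
  have hUopen : IsOpen U := by
    have hcont : Continuous fun p : K × ℝ => p.2 + R * ‖p.1‖ := by fun_prop
    exact isOpen_lt hcont continuous_const
  have hUconv : Convex ℝ U := by
    intro p hp q hq a b ha hb hab
    simp only [hUdef, Set.mem_setOf_eq] at hp hq ⊢
    have h1 : ‖(a • p + b • q).1‖ ≤ a * ‖p.1‖ + b * ‖q.1‖ := by
      calc ‖a • p.1 + b • q.1‖ ≤ ‖a • p.1‖ + ‖b • q.1‖ := norm_add_le _ _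
        _ = a * ‖p.1‖ + b * ‖q.1‖ := by
            rw [norm_smul, norm_smul, Real.norm_eq_abs, Real.norm_eq_abs,
              abs_of_nonneg ha, abs_of_nonneg hb]
    have h2 : (a • p + b • q).2 = a * p.2 + b * q.2 := rfl
    have h3 : R * ‖(a • p + b • q).1‖ ≤ R * (a * ‖p.1‖ + b * ‖q.1‖) :=
      mul_le_mul_of_nonneg_left h1 hR0
    rw [h2]
    have hcomb : a * p.2 + b * q.2 + R * (a * ‖p.1‖ + b * ‖q.1‖) < 0 := by
      rcases eq_or_lt_of_le ha with rfl | ha'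
      · have hb1 : b = 1 := by linarith
        rw [hb1]
        simp only [zero_mul, one_mul, zero_add, mul_zero]
        linarith
      · have hA := mul_lt_mul_of_pos_left hp ha'
        have hB := mul_le_mul_of_nonneg_left hq.le hb
        nlinarith [hA, hB]
    linarith
  have hAconv : Convex ℝ A := ((convex_convexHull ℝ S').linear_image T.toLinearMap)
  have hdisj : Disjoint U A := by
    rw [Set.disjoint_right]
    rintro p ⟨w, hw, rfl⟩ hpU
    have hwV : w ∈ V := hhullV hw
    simp only [hUdef, Set.mem_setOf_eq] at hpU
    have hTw : T w = (O w, ⟪y₀, L w⟫) := by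
      simp [hTdef]
    rw [hTw] at hpU
    have hib : |⟪y₀, L w⟫| ≤ ‖y₀‖ * ‖L w‖ := abs_real_inner_le_norm _ _
    have hobsw : ‖L w‖ ≤ C * ‖O w‖ := hobs w hwV
    have h4 : ‖y₀‖ * ‖L w‖ ≤ ‖y₀‖ * (C * ‖O w‖) :=
      mul_le_mul_of_nonneg_left hobsw (norm_nonneg _)
    have h5 : -(R * ‖O w‖) ≤ ⟪y₀, L w⟫ := by
      have := neg_abs_le (⟪y₀, L w⟫)
      rw [hRdef]
      nlinarith
    linarith
  obtain ⟨f, u, hfU, hfA⟩ := geometric_hahn_banach_open hUconv hUopen hAconv hdisj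
  -- 0 ∈ A, so u ≤ 0
  have h0S' : (0 : H) ∈ S' := ⟨0, le_refl 0, u₁, hu₁, by simp⟩
  have h0A : (0 : K × ℝ) ∈ A := ⟨0, subset_convexHull ℝ S' h0S', by simp⟩
  have hu0 : u ≤ 0 := by
    have := hfA 0 h0A
    simpa using this
  set s : ℝ := f (0, 1) with hsdef
  have hspos : 0 < s := by
    have hmem : ((0 : K), (-1 : ℝ)) ∈ U := by
      simp [hUdef]
    have h1 : f (0, -1) < u := hfU _ hmem
    have h2 : f (0, -1) = -s := by
      have : ((0 : K), (-1 : ℝ)) = (-1 : ℝ) • ((0 : K), (1 : ℝ)) := by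
        simp
      rw [this, map_smul]
      simp [hsdef]
    rw [h2] at h1
    linarith
  -- Riesz representation of k ↦ f (k, 0)
  set h'' : K := (InnerProductSpace.toDual ℝ K).symm
    (f.comp (ContinuousLinearMap.inl ℝ K ℝ)) with hh''def
  have hh''eq : ∀ k : K, ⟪h'', k⟫ = f (k, 0) := by
    intro k
    rw [hh''def, InnerProductSpace.toDual_symm_apply]
    rfl
  have hfsplit : ∀ (k : K) (t : ℝ), f (k, t) = ⟪h'', k⟫ + t * s := by
    intro k t
    have : ((k : K), t) = ((k, 0) : K × ℝ) + t • ((0 : K), (1 : ℝ)) := by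
      simp
    rw [this, map_add, map_smul, hh''eq k]
    simp [hsdef]
  set h : K := s⁻¹ • h'' with hhdef
  -- norm bound: ⟪h'', k⟫ ≤ s * (R * ‖k‖) for all k
  have hbound : ∀ k : K, ⟪h'', k⟫ ≤ s * (R * ‖k‖) := by
    intro k
    by_contra hcon
    push_neg at hcon
    set ε : ℝ := (⟪h'', k⟫ - s * (R * ‖k‖)) / s with hεdef
    have hε : 0 < ε := div_pos (by linarith) hspos
    have hmem : ((k : K), (-(R * ‖k‖) - ε)) ∈ U := by
      simp only [hUdef, Set.mem_setOf_eq]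
      linarith
    have h1 : f (k, -(R * ‖k‖) - ε) < u := hfU _ hmem
    rw [hfsplit] at h1
    have h2 : ε * s = ⟪h'', k⟫ - s * (R * ‖k‖) := by
      rw [hεdef, div_mul_cancel₀ _ (ne_of_gt hspos)]
    linarith
  have hnormh : ‖h‖ ≤ R := by
    have h1 : ⟪h, h⟫ ≤ R * ‖h‖ := by
      have h2 : ⟪h'', h⟫ ≤ s * (R * ‖h‖) := hbound h
      have h3 : ⟪h, h⟫ = s⁻¹ * ⟪h'', h⟫ := by
        rw [hhdef, real_inner_smul_left]
      rw [h3]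
      rw [inv_mul_le_iff₀ hspos]
      linarith [h2]
    have h4 : ‖h‖ ^ 2 = ⟪h, h⟫ := (real_inner_self_eq_norm_sq h).symm
    nlinarith [norm_nonneg h]
  refine ⟨h, hnormh, ?_⟩
  intro u₀ hu₀
  -- positivity on the cone
  have hfpos : 0 ≤ f (T u₀) := by
    by_contra hcon
    push_neg at hcon
    set c : ℝ := (u - 1) / f (T u₀) with hcdef
    have hc : 0 < c := div_pos_of_neg_of_neg (by linarith) hcon
    have hmem : c • T u₀ ∈ A := by
      refine ⟨c • u₀, subset_convexHull ℝ S' ⟨c, hc.le, u₀, hu₀, rfl⟩, ?_⟩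
      rw [map_smul]
    have h1 : u ≤ f (c • T u₀) := hfA _ hmem
    rw [map_smul] at h1
    have h2 : c • f (T u₀) = u - 1 := by
      rw [smul_eq_mul, hcdef, div_mul_cancel₀ _ (ne_of_lt hcon)]
    rw [h2] at h1
    linarith
  have hfT : f (T u₀) = ⟪h'', O u₀⟫ + ⟪y₀, L u₀⟫ * s := by
    have hTu : T u₀ = (O u₀, ⟪y₀, L u₀⟫) := by
      simp [hTdef]
    rw [hTu, hfsplit]
  have hgoal : ⟪L.adjoint y₀ + O.adjoint h, u₀⟫
      = ⟪y₀, L u₀⟫ + s⁻¹ * ⟪h'', O u₀⟫ := by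
    rw [inner_add_left, ContinuousLinearMap.adjoint_inner_left,
      ContinuousLinearMap.adjoint_inner_left, hhdef, real_inner_smul_left]
  rw [hgoal]
  rw [hfT] at hfpos
  have h5 : 0 ≤ s * (⟪y₀, L u₀⟫ + s⁻¹ * ⟪h'', O u₀⟫) := by
    rw [mul_add, ← mul_assoc, mul_inv_cancel₀ (ne_of_gt hspos), one_mul]
    linarith
  nlinarith [hspos]
end

section
/- Let M be a compact metric space, ω ⊆ M a nonempty open set, a < b real numbers, and ν a Borel measure on M such that every nonempty open ball has positive ν-measure. Let F : M × M × [a,b] → ℝ be continuous and nonnegative, and assume that for every y ∈ M there exist x ∈ ω and t ∈ (a,b) with F(x,y,t) = 0. Then for every δ > 0 there exists C_δ > 0 such that for every y ∈ M there is an open set U_y ⊆ ω × (a,b) with (ν ⊗ λ)(U_y) ≥ C_δ (λ denoting Lebesgue measure on ℝ) and F(x,y,t) ≤ δ for all (x,t) ∈ U_y. -/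
open MeasureTheory

/-- Lemma 5.7 (abstract form): if a continuous nonnegative cost `F` vanishes, for
every `y`, at some point of the observation region `ω × (a,b)`, then for every
`δ > 0` there is a uniform constant `C_δ > 0` such that, for every `y`, the cost is
at most `δ` on an open subset of `ω × (a,b)` of product measure at least `C_δ`. -/
theorem stmt9 {M : Type*} [MetricSpace M] [CompactSpace M]
    [MeasurableSpace M] [BorelSpace M]
    (ω : Set M) (hω : IsOpen ω) (hωne : ω.Nonempty)
    (a b : ℝ) (hab : a < b)
    (ν : Measure M)
    (hν : ∀ (x : M) (r : ℝ), 0 < r → 0 < ν (Metric.ball x r))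
    (F : M → M → ℝ → ℝ)
    (hFc : ContinuousOn (fun p : M × M × ℝ => F p.1 p.2.1 p.2.2)
      (Set.univ ×ˢ Set.univ ×ˢ Set.Icc a b))
    (hF0 : ∀ x y : M, ∀ t ∈ Set.Icc a b, 0 ≤ F x y t)
    (hGCC : ∀ y : M, ∃ x ∈ ω, ∃ t ∈ Set.Ioo a b, F x y t = 0) :
    ∀ δ > 0, ∃ Cδ > 0, ∀ y : M, ∃ U : Set (M × ℝ),
      IsOpen U ∧ U ⊆ ω ×ˢ Set.Ioo a b ∧
      ENNReal.ofReal Cδ ≤ (ν.prod volume) U ∧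
      ∀ p ∈ U, F p.1 y p.2 ≤ δ := by
  intro δ hδ
  -- Step 1: for every y find a radius r, a point x and time t such that the cost is ≤ δ
  -- on ball x r × ball y r × Ioo (t-r) (t+r), with ball x r ⊆ ω and Ioo(t-r,t+r) ⊆ Ioo a b.
  have key : ∀ y : M, ∃ r > 0, ∃ x : M, ∃ t : ℝ,
      Metric.ball x r ⊆ ω ∧ Set.Ioo (t - r) (t + r) ⊆ Set.Ioo a b ∧
      ∀ x' ∈ Metric.ball x r, ∀ y' ∈ Metric.ball y r, ∀ t' ∈ Set.Ioo (t - r) (t + r),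
        F x' y' t' ≤ δ := by
    intro y
    obtain ⟨x, hxω, t, htab, hF⟩ := hGCC y
    have hmem : ((x, y, t) : M × M × ℝ) ∈ Set.univ ×ˢ Set.univ ×ˢ Set.Icc a b := by
      refine ⟨Set.mem_univ _, Set.mem_univ _, Set.mem_Icc_of_Ioo htab⟩
    have hcw := hFc (x, y, t) hmem
    have hlt : {z : ℝ | z < δ} ∈ nhds (F x y t) := by
      rw [hF]; exact IsOpen.mem_nhds isOpen_Iio hδ
    have hev := hcw hlt
    rw [Filter.mem_map, Metric.mem_nhdsWithin_iff] at hev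
    obtain ⟨ε, hε, hball⟩ := hev
    obtain ⟨rω, hrω, hrωsub⟩ := Metric.isOpen_iff.1 hω x hxω
    set r := min ε (min rω (min (t - a) (b - t))) with hr
    have hr0 : 0 < r := by
      simp only [hr, lt_min_iff]
      exact ⟨hε, hrω, sub_pos.2 htab.1, sub_pos.2 htab.2⟩
    refine ⟨r, hr0, x, t, ?_, ?_, ?_⟩
    · exact fun z hz => hrωsub (Metric.ball_subset_ball (le_trans (min_le_right _ _)
        (min_le_left _ _)) hz)
    · intro s hs
      have h1 : r ≤ t - a := le_trans (min_le_right _ _) (le_trans (min_le_right _ _)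
        (min_le_left _ _))
      have h2 : r ≤ b - t := le_trans (min_le_right _ _) (le_trans (min_le_right _ _)
        (min_le_right _ _))
      exact ⟨by linarith [hs.1], by linarith [hs.2]⟩
    · intro x' hx' y' hy' t' ht'
      have h1 : r ≤ t - a := le_trans (min_le_right _ _) (le_trans (min_le_right _ _)
        (min_le_left _ _))
      have h2 : r ≤ b - t := le_trans (min_le_right _ _) (le_trans (min_le_right _ _)
        (min_le_right _ _))
      have htIcc : t' ∈ Set.Icc a b := ⟨by linarith [ht'.1], by linarith [ht'.2]⟩
      have hdist : ((x', y', t') : M × M × ℝ) ∈ Metric.ball (x, y, t) ε := by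
        rw [Metric.mem_ball, Prod.dist_eq, Prod.dist_eq]
        have hrε : r ≤ ε := min_le_left _ _
        have hx'' : dist x' x < ε := lt_of_lt_of_le (Metric.mem_ball.1 hx') hrε
        have hy'' : dist y' y < ε := lt_of_lt_of_le (Metric.mem_ball.1 hy') hrε
        have ht'' : dist t' t < ε := by
          rw [Real.dist_eq, abs_lt]
          constructor <;> [linarith [ht'.1, hrε]; linarith [ht'.2, hrε]]
        exact max_lt hx'' (max_lt hy'' ht'')
      have := hball ⟨hdist, Set.mem_univ _, Set.mem_univ _, htIcc⟩
      exact le_of_lt this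
  choose r hr0 x t hxω htab hFle using key
  -- Step 2: compactness covering
  have hcover : (Set.univ : Set M) ⊆ ⋃ y : M, Metric.ball y (r y) :=
    fun y _ => Set.mem_iUnion.2 ⟨y, Metric.mem_ball_self (hr0 y)⟩
  obtain ⟨S, hS⟩ := isCompact_univ.elim_finite_subcover
    (fun y => Metric.ball y (r y)) (fun y => Metric.isOpen_ball) hcover
  have hMne : Nonempty M := ⟨hωne.choose⟩
  have hSne : S.Nonempty := by
    by_contra h
    rw [Finset.not_nonempty_iff_eq_empty] at h
    have := hS (Set.mem_univ hMne.some)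
    simp [h] at this
  -- Step 3: the constant
  set m : M → ℝ := fun y0 => (min (ν (Metric.ball (x y0) (r y0))) 1).toReal * (2 * r y0)
    with hm
  have hmpos : ∀ y0, 0 < m y0 := by
    intro y0
    apply mul_pos
    · apply ENNReal.toReal_pos
      · exact (lt_min (hν _ _ (hr0 y0)) one_pos).ne'
      · exact ne_of_lt (lt_of_le_of_lt (min_le_right _ _) ENNReal.one_lt_top)
    · linarith [hr0 y0]
  refine ⟨S.inf' hSne m, ?_, ?_⟩
  · simp only [gt_iff_lt, Finset.lt_inf'_iff]
    exact fun i _ => hmpos i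
  · intro y
    obtain ⟨y0, hy0S, hy0⟩ := Set.mem_iUnion₂.1 (hS (Set.mem_univ y))
    refine ⟨Metric.ball (x y0) (r y0) ×ˢ Set.Ioo (t y0 - r y0) (t y0 + r y0),
      Metric.isOpen_ball.prod isOpen_Ioo,
      Set.prod_mono (hxω y0) (htab y0), ?_, ?_⟩
    · rw [Measure.prod_prod, Real.volume_Ioo]
      have h2r : t y0 + r y0 - (t y0 - r y0) = 2 * r y0 := by ring
      rw [h2r]
      have hle : ENNReal.ofReal (S.inf' hSne m) ≤ ENNReal.ofReal (m y0) :=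
        ENNReal.ofReal_le_ofReal (Finset.inf'_le m hy0S)
      refine hle.trans ?_
      rw [hm]
      have hne : min (ν (Metric.ball (x y0) (r y0))) 1 ≠ ⊤ :=
        ne_of_lt (lt_of_le_of_lt (min_le_right _ _) ENNReal.one_lt_top)
      rw [ENNReal.ofReal_mul ENNReal.toReal_nonneg, ENNReal.ofReal_toReal hne]
      exact mul_le_mul_left (min_le_left _ _) _
    · rintro ⟨x', t'⟩ ⟨hx', ht'⟩
      exact hFle y0 x' hx' y hy0 t' ht'
end

section
/- Let n ≥ 1, λ ≥ 0, T ≥ 0, and let γ : [0,T] → ℝⁿ be differentiable with γᵢ'(t) = −√(λ² γᵢ(t)² + 1) for every coordinate i ∈ {1,…,n} and every t ∈ [0,T]. Then for every v ∈ ℝⁿ with |v| = 1 and vᵢ ≥ 0 for all i, one has ⟨γ(T), v⟩ ≤ ⟨γ(0), v⟩ − T. Consequently, if Ω ⊆ ℝⁿ is bounded, γ(0) ∈ Ω̄, and T > sup_{z∈Ω̄} ⟨z, v⟩ − inf_{z∈Ω̄} ⟨z, v⟩ for some such v, then γ(T) ∉ Ω̄. -/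
/-- Lemma 3.9 (coordinate form): an integral curve of `-∇f_λ`, where
`∂ᵢf_λ(x) = √(λ²xᵢ² + 1)`, drifts with speed at least `1` in any unit direction `v`
with nonnegative coordinates; consequently it leaves the closure of any bounded set
`Ω` after time exceeding the width of `Ω` in the direction `v`. -/
theorem stmt11 (n : ℕ) (hn : 1 ≤ n) (lam T : ℝ) (hlam : 0 ≤ lam) (hT : 0 ≤ T)
    (γ : ℝ → Fin n → ℝ)
    (hγ : ∀ (i : Fin n), ∀ t ∈ Set.Icc (0:ℝ) T,
      HasDerivWithinAt (fun s => γ s i)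
        (-Real.sqrt (lam^2 * (γ t i)^2 + 1)) (Set.Icc 0 T) t)
    (v : Fin n → ℝ) (hv1 : ∑ i, (v i)^2 = 1) (hv2 : ∀ i, 0 ≤ v i) :
    (∑ i, γ T i * v i ≤ ∑ i, γ 0 i * v i - T) ∧
    (∀ Ω : Set (Fin n → ℝ), Bornology.IsBounded Ω → γ 0 ∈ closure Ω →
      sSup ((fun z => ∑ i, z i * v i) '' closure Ω) -
        sInf ((fun z => ∑ i, z i * v i) '' closure Ω) < T →
      γ T ∉ closure Ω) := by
  have hS : (0:ℝ) ≤ ∑ i, v i := Finset.sum_nonneg (fun i _ => hv2 i)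
  have hsumv : (1:ℝ) ≤ ∑ i, v i := by
    have h1 : ∑ i, (v i)^2 ≤ (∑ i, v i) * (∑ i, v i) := by
      rw [Finset.sum_mul]
      apply Finset.sum_le_sum
      intro i _
      have : v i ≤ ∑ j, v j := Finset.single_le_sum (fun j _ => hv2 j) (Finset.mem_univ i)
      nlinarith [hv2 i]
    nlinarith
  -- g(t) = ∑ γ t i * v i + t is antitone on [0,T]
  set g : ℝ → ℝ := fun t => (∑ i, γ t i * v i) + t with hg
  have hgderiv : ∀ t ∈ Set.Icc (0:ℝ) T,
      HasDerivWithinAt g ((∑ i, -Real.sqrt (lam^2 * (γ t i)^2 + 1) * v i) + 1)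
        (Set.Icc 0 T) t := by
    intro t ht
    have h1 : HasDerivWithinAt (fun s => ∑ i, γ s i * v i)
        (∑ i, -Real.sqrt (lam^2 * (γ t i)^2 + 1) * v i) (Set.Icc 0 T) t := by
      apply HasDerivWithinAt.fun_sum
      intro i _
      exact (hγ i t ht).mul_const (v i)
    exact h1.add (hasDerivWithinAt_id t _)
  have hd_nonpos : ∀ t ∈ Set.Icc (0:ℝ) T,
      (∑ i, -Real.sqrt (lam^2 * (γ t i)^2 + 1) * v i) + 1 ≤ 0 := by
    intro t ht
    have : ∑ i, v i ≤ ∑ i, Real.sqrt (lam^2 * (γ t i)^2 + 1) * v i := by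
      apply Finset.sum_le_sum
      intro i _
      have h1 : (1:ℝ) ≤ Real.sqrt (lam^2 * (γ t i)^2 + 1) := by
        have h0 : Real.sqrt 1 ≤ Real.sqrt (lam^2 * (γ t i)^2 + 1) := by
          apply Real.sqrt_le_sqrt
          nlinarith [sq_nonneg (lam * γ t i)]
        rwa [Real.sqrt_one] at h0
      nlinarith [hv2 i]
    have h2 : ∑ i, -Real.sqrt (lam^2 * (γ t i)^2 + 1) * v i
        = -(∑ i, Real.sqrt (lam^2 * (γ t i)^2 + 1) * v i) := by
      rw [← Finset.sum_neg_distrib]; congr 1; ext i; ring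
    rw [h2]; linarith
  have hanti : AntitoneOn g (Set.Icc 0 T) := by
    apply antitoneOn_of_deriv_nonpos (convex_Icc 0 T)
    · intro t ht
      exact (hgderiv t ht).continuousWithinAt
    · intro t ht
      rw [interior_Icc] at ht
      have hmem : t ∈ Set.Icc (0:ℝ) T := Set.mem_Icc_of_Ioo ht
      have hnhds : Set.Icc (0:ℝ) T ∈ nhds t := Icc_mem_nhds ht.1 ht.2
      exact ((hgderiv t hmem).hasDerivAt hnhds).differentiableAt.differentiableWithinAt
    · intro t ht
      rw [interior_Icc] at ht
      have hmem : t ∈ Set.Icc (0:ℝ) T := Set.mem_Icc_of_Ioo ht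
      have hnhds : Set.Icc (0:ℝ) T ∈ nhds t := Icc_mem_nhds ht.1 ht.2
      rw [((hgderiv t hmem).hasDerivAt hnhds).deriv]
      exact hd_nonpos t hmem
  have key : g T ≤ g 0 := hanti (Set.left_mem_Icc.mpr hT) (Set.right_mem_Icc.mpr hT) hT
  have part1 : ∑ i, γ T i * v i ≤ ∑ i, γ 0 i * v i - T := by
    simp only [hg] at key; linarith
  refine ⟨part1, ?_⟩
  intro Ω hΩ h0 hwidth hTmem
  set f : (Fin n → ℝ) → ℝ := fun z => ∑ i, z i * v i with hf
  -- image of closure Ω under f is bounded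
  obtain ⟨R, hR⟩ := (hΩ.closure).exists_norm_le
  have hbd : ∀ y ∈ f '' closure Ω, |y| ≤ R * ∑ i, v i := by
    rintro y ⟨z, hz, rfl⟩
    calc |∑ i, z i * v i| ≤ ∑ i, |z i * v i| := Finset.abs_sum_le_sum_abs _ _
      _ ≤ ∑ i, R * v i := by
          apply Finset.sum_le_sum
          intro i _
          rw [abs_mul, abs_of_nonneg (hv2 i)]
          have : |z i| ≤ ‖z‖ := norm_le_pi_norm z i
          have hRz := hR z hz
          nlinarith [hv2 i, abs_nonneg (z i)]
      _ = R * ∑ i, v i := by rw [Finset.mul_sum]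
  have hne : (f '' closure Ω).Nonempty := ⟨f (γ 0), ⟨γ 0, h0, rfl⟩⟩
  have hbdd_above : BddAbove (f '' closure Ω) :=
    ⟨R * ∑ i, v i, fun y hy => (abs_le.mp (hbd y hy)).2⟩
  have hbdd_below : BddBelow (f '' closure Ω) :=
    ⟨-(R * ∑ i, v i), fun y hy => (abs_le.mp (hbd y hy)).1⟩
  have h1 : f (γ 0) ≤ sSup (f '' closure Ω) := le_csSup hbdd_above ⟨γ 0, h0, rfl⟩
  have h2 : sInf (f '' closure Ω) ≤ f (γ T) := csInf_le hbdd_below ⟨γ T, hTmem, rfl⟩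
  simp only [hf] at h1 h2
  linarith
end

section
/- Let L > 0, c > 0, s₁ ∈ (0, L), C₁ > 0. Let R : (0,L) → (0,∞) be continuous with |R(s) − s| ≤ C₁ s³ for all s ∈ (0, s₁], and let w : (0,L) → [0,∞) be continuous and bounded. Define V(s) := c²/R(s)² + w(s), and assume V attains a global minimum over (0,L) at a point s_min ∈ (0,L), with minimal value E₀. For s ∈ (0, s_min], set d_A(s) := ∫_s^{s_min} √(V(y) − E₀) dy. Then there exist C > 0 and s₀ ∈ (0, s_min) such that |d_A(s) + c · log s| ≤ C for all s ∈ (0, s₀]. -/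
set_option maxHeartbeats 1000000


open MeasureTheory

/-- Lemma 4.2, equation (4.6): for the effective potential `V(s) = c²/R(s)² + w(s)`
with `R(s) = s + O(s³)` near `0` and `w` bounded, the Agmon distance to the unique
potential minimum satisfies `d_A(s) = -c log s + O(1)` as `s → 0⁺`. -/
theorem stmt13 (L c s₁ C₁ : ℝ) (hL : 0 < L) (hc : 0 < c)
    (hs₁ : s₁ ∈ Set.Ioo 0 L) (hC₁ : 0 < C₁)
    (R w : ℝ → ℝ)
    (hRc : ContinuousOn R (Set.Ioo 0 L))
    (hRpos : ∀ s ∈ Set.Ioo (0:ℝ) L, 0 < R s)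
    (hRs : ∀ s ∈ Set.Ioc (0:ℝ) s₁, |R s - s| ≤ C₁ * s^3)
    (hwc : ContinuousOn w (Set.Ioo 0 L))
    (hw0 : ∀ s ∈ Set.Ioo (0:ℝ) L, 0 ≤ w s)
    (hwb : ∃ B : ℝ, ∀ s ∈ Set.Ioo (0:ℝ) L, w s ≤ B)
    (smin : ℝ) (hsmin : smin ∈ Set.Ioo 0 L)
    (hmin : ∀ s ∈ Set.Ioo (0:ℝ) L,
      c^2/(R smin)^2 + w smin ≤ c^2/(R s)^2 + w s) :
    ∃ C > 0, ∃ s₀ ∈ Set.Ioo (0:ℝ) smin, ∀ s ∈ Set.Ioc (0:ℝ) s₀,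
      |(∫ z in s..smin,
          Real.sqrt ((c^2/(R z)^2 + w z) - (c^2/(R smin)^2 + w smin)))
        + c * Real.log s| ≤ C := by
  classical
  obtain ⟨B, hB⟩ := hwb
  set E₀ : ℝ := c^2/(R smin)^2 + w smin with hE₀def
  have hRsminpos : 0 < R smin := hRpos smin hsmin
  have hE₀pos : 0 < E₀ := by
    have h1 : 0 < c^2/(R smin)^2 := by positivity
    have h2 := hw0 smin hsmin
    simp only [hE₀def]; linarith
  have hBnn : 0 ≤ B := le_trans (hw0 smin hsmin) (hB smin hsmin)
  have hsE : 0 < Real.sqrt E₀ := Real.sqrt_pos.mpr hE₀pos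
  clear_value E₀
  -- choose s₀
  set s₀ : ℝ := min (min s₁ (smin/2))
      (min (Real.sqrt (1/(2*C₁))) (c/(2*Real.sqrt E₀))) with hs₀def
  have hs₀pos : 0 < s₀ := by
    apply lt_min (lt_min hs₁.1 (by linarith [hsmin.1]))
    apply lt_min (Real.sqrt_pos.mpr (by positivity)) (by positivity)
  have hs₀lt : s₀ < smin := by
    have : s₀ ≤ smin/2 := le_trans (min_le_left _ _) (min_le_right _ _)
    linarith [hsmin.1]
  have hs₀s₁ : s₀ ≤ s₁ := le_trans (min_le_left _ _) (min_le_left _ _)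
  have hs₀a3 : s₀ ≤ Real.sqrt (1/(2*C₁)) :=
    le_trans (min_le_right _ _) (min_le_left _ _)
  have hs₀a4 : s₀ ≤ c/(2*Real.sqrt E₀) :=
    le_trans (min_le_right _ _) (min_le_right _ _)
  clear_value s₀
  -- fV is the integrand
  set fV : ℝ → ℝ := fun z => Real.sqrt ((c^2/(R z)^2 + w z) - E₀) with hfVdef
  set M : ℝ := 2*c*C₁*s₀ + Real.sqrt B + Real.sqrt E₀ with hMdef
  have hMnn : 0 ≤ M := by
    have := Real.sqrt_nonneg B
    have := Real.sqrt_nonneg E₀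
    have : 0 ≤ 2*c*C₁*s₀ := by positivity
    simp only [hMdef]; linarith [Real.sqrt_nonneg B, Real.sqrt_nonneg E₀]
  clear_value M
  -- basic facts for y ∈ (0, s₀]
  have hyfacts : ∀ y ∈ Set.Ioc (0:ℝ) s₀, |fV y - c/y| ≤ M := by
    rintro y ⟨hy0, hys₀⟩
    have hyL : y ∈ Set.Ioo (0:ℝ) L := ⟨hy0, by linarith [hsmin.2]⟩
    have hRy : 0 < R y := hRpos y hyL
    have hRsb := hRs y ⟨hy0, le_trans hys₀ hs₀s₁⟩
    have hC₁y : C₁ * y^2 ≤ 1/2 := by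
      have h1 : y^2 ≤ 1/(2*C₁) := by
        have h2 : (Real.sqrt (1/(2*C₁)))^2 = 1/(2*C₁) :=
          Real.sq_sqrt (by positivity)
        nlinarith [le_trans hys₀ hs₀a3]
      calc C₁ * y^2 ≤ C₁ * (1/(2*C₁)) := by nlinarith
        _ = 1/2 := by field_simp
    have habs := abs_le.mp hRsb
    have hRlow : y/2 ≤ R y := by nlinarith
    have hRhigh : R y ≤ 2*y := by nlinarith
    -- E₀ ≤ c²/(R y)²
    have hRyE : R y * Real.sqrt E₀ ≤ c := by
      have h2s : 2*s₀ ≤ c/Real.sqrt E₀ := by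
        rw [le_div_iff₀ hsE]
        have := hs₀a4
        rw [le_div_iff₀ (by positivity)] at this
        nlinarith
      have hRc2 : R y ≤ c/Real.sqrt E₀ := by
        calc R y ≤ 2*y := hRhigh
          _ ≤ 2*s₀ := by linarith
          _ ≤ c/Real.sqrt E₀ := h2s
      rw [le_div_iff₀ hsE] at hRc2
      exact hRc2
    have hEc : E₀ ≤ c^2/(R y)^2 := by
      rw [le_div_iff₀ (by positivity)]
      have hE : Real.sqrt E₀ * Real.sqrt E₀ = E₀ := Real.mul_self_sqrt hE₀pos.le
      have h2 := mul_self_le_mul_self (by positivity : (0:ℝ) ≤ R y * Real.sqrt E₀) hRyE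
      calc E₀ * R y ^ 2 = (R y * Real.sqrt E₀) * (R y * Real.sqrt E₀) := by
            rw [show (R y * Real.sqrt E₀) * (R y * Real.sqrt E₀)
              = (Real.sqrt E₀ * Real.sqrt E₀) * R y ^2 by ring, hE]
        _ ≤ c * c := h2
        _ = c ^ 2 := by ring
    have hwy := hw0 y hyL
    have hwyB := hB y hyL
    -- c/R y within 2cC₁s₀ of c/y
    have h1p : 0 ≤ c * (R y - (y - C₁*y^3)) :=
      mul_nonneg hc.le (by linarith [habs.1])
    have h1q : 0 ≤ c * ((y + C₁*y^3) - R y) :=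
      mul_nonneg hc.le (by linarith [habs.2])
    have hyRy : y^2/2 ≤ y * R y := by nlinarith [mul_le_mul_of_nonneg_left hRlow hy0.le]
    have h2p : 0 ≤ 2*c*C₁*s₀ * (y * R y - y^2/2) :=
      mul_nonneg (by positivity) (by linarith)
    have h3p : 0 ≤ c*C₁ * (s₀*y^2 - y^3) := by
      have : 0 ≤ (s₀ - y) * y^2 := mul_nonneg (by linarith) (sq_nonneg y)
      nlinarith
    have hclose1 : c/(R y) ≤ c/y + 2*c*C₁*s₀ := by
      rw [div_add' _ _ _ hy0.ne', div_le_div_iff₀ hRy hy0]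
      nlinarith [h1p, h2p, h3p]
    have hclose2 : c/y ≤ c/(R y) + 2*c*C₁*s₀ := by
      rw [div_add' _ _ _ hRy.ne', div_le_div_iff₀ hy0 hRy]
      nlinarith [h1q, h2p, h3p]
    -- upper bound on fV y
    have hup : fV y ≤ c/(R y) + Real.sqrt B := by
      have h1 : fV y ≤ Real.sqrt (c^2/(R y)^2 + B) := by
        apply Real.sqrt_le_sqrt
        have : 0 ≤ E₀ := hE₀pos.le
        linarith
      have h2 : Real.sqrt (c^2/(R y)^2 + B) ≤ c/(R y) + Real.sqrt B := by
        have hcR : (0:ℝ) ≤ c/(R y) := by positivity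
        have h3 : c^2/(R y)^2 + B ≤ (c/(R y) + Real.sqrt B)^2 := by
          have hsb : (Real.sqrt B)^2 = B := Real.sq_sqrt hBnn
          have : c^2/(R y)^2 = (c/(R y))^2 := by rw [div_pow]
          nlinarith [Real.sqrt_nonneg B]
        calc Real.sqrt (c^2/(R y)^2 + B)
            ≤ Real.sqrt ((c/(R y) + Real.sqrt B)^2) := Real.sqrt_le_sqrt h3
          _ = c/(R y) + Real.sqrt B := Real.sqrt_sq (by positivity)
      linarith
    -- lower bound on fV y
    have hsEcR : Real.sqrt E₀ ≤ c/(R y) := by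
      have := Real.sqrt_le_sqrt hEc
      rwa [show c^2/(R y)^2 = (c/(R y))^2 by rw [div_pow],
        Real.sqrt_sq (by positivity)] at this
    have hlow : c/(R y) - Real.sqrt E₀ ≤ fV y := by
      have h3 : (c/(R y) - Real.sqrt E₀)^2 ≤ (c^2/(R y)^2 + w y) - E₀ := by
        have hsb : (Real.sqrt E₀)^2 = E₀ := Real.sq_sqrt hE₀pos.le
        have : c^2/(R y)^2 = (c/(R y))^2 := by rw [div_pow]
        nlinarith [hsE.le]
      calc c/(R y) - Real.sqrt E₀
          = Real.sqrt ((c/(R y) - Real.sqrt E₀)^2) :=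
            (Real.sqrt_sq (by linarith)).symm
        _ ≤ fV y := Real.sqrt_le_sqrt h3
    rw [abs_le]
    constructor
    · have := Real.sqrt_nonneg B
      linarith
    · linarith [Real.sqrt_nonneg E₀]
  -- continuity of fV on Ioo 0 L
  have hfVcont : ContinuousOn fV (Set.Ioo 0 L) := by
    apply Real.continuous_sqrt.comp_continuousOn
    apply ContinuousOn.sub _ continuousOn_const
    apply ContinuousOn.add _ hwc
    exact continuousOn_const.div (hRc.pow 2)
      (fun s hs => pow_ne_zero 2 (hRpos s hs).ne')
  -- integrability on subintervals of Ioo 0 L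
  have hfVint : ∀ a b : ℝ, 0 < a → a ≤ b → b < L →
      IntervalIntegrable fV volume a b := by
    intro a b ha hab hbL
    apply ContinuousOn.intervalIntegrable
    apply hfVcont.mono
    rw [Set.uIcc_of_le hab]
    intro x hx
    exact ⟨lt_of_lt_of_le ha hx.1, lt_of_le_of_lt hx.2 hbL⟩
  set C : ℝ := M*s₀ + |c * Real.log s₀| + |∫ z in s₀..smin, fV z| + 1
    with hCdef
  refine ⟨C, by positivity, s₀, ⟨hs₀pos, hs₀lt⟩, ?_⟩
  rintro s ⟨hspos, hss₀⟩
  have hsminL := hsmin.2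
  -- split the integral
  have hint1 : IntervalIntegrable fV volume s s₀ :=
    hfVint s s₀ hspos hss₀ (by linarith)
  have hint2 : IntervalIntegrable fV volume s₀ smin :=
    hfVint s₀ smin hs₀pos hs₀lt.le hsminL
  have hsplit : (∫ z in s..smin, fV z)
      = (∫ z in s..s₀, fV z) + ∫ z in s₀..smin, fV z :=
    (intervalIntegral.integral_add_adjacent_intervals hint1 hint2).symm
  -- integrability of y ↦ c/y
  have hintcy : IntervalIntegrable (fun y => c/y) volume s s₀ := by
    apply ContinuousOn.intervalIntegrable
    apply ContinuousOn.div continuousOn_const continuousOn_id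
    intro x hx
    rw [Set.uIcc_of_le hss₀] at hx
    exact (lt_of_lt_of_le hspos hx.1).ne'
  -- the middle piece
  have hi1 : (∫ z in s..s₀, fV z)
      = (∫ z in s..s₀, (fV z - c/z)) + ∫ z in s..s₀, c/z := by
    rw [← intervalIntegral.integral_add (hint1.sub hintcy) hintcy]
    congr 1 with z
    ring
  have hlogint : (∫ z in s..s₀, c/z) = c * (Real.log s₀ - Real.log s) := by
    have h0 : (0:ℝ) ∉ Set.uIcc s s₀ := by
      rw [Set.uIcc_of_le hss₀]
      intro h
      exact absurd h.1 (not_le.mpr hspos)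
    have : (∫ z in s..s₀, c/z) = c * ∫ z in s..s₀, 1/z := by
      rw [← intervalIntegral.integral_const_mul]
      congr 1 with z
      ring
    rw [this, integral_one_div h0, Real.log_div hs₀pos.ne' hspos.ne']
  -- bound the error integral
  have herr : |∫ z in s..s₀, (fV z - c/z)| ≤ M * s₀ := by
    have h1 : ‖∫ z in s..s₀, (fV z - c/z)‖ ≤ M * |s₀ - s| := by
      apply intervalIntegral.norm_integral_le_of_norm_le_const
      intro x hx
      rw [Set.uIoc_of_le hss₀] at hx
      rw [Real.norm_eq_abs]
      exact hyfacts x ⟨lt_trans hspos hx.1, hx.2⟩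
    rw [Real.norm_eq_abs] at h1
    calc |∫ z in s..s₀, (fV z - c/z)| ≤ M * |s₀ - s| := h1
      _ ≤ M * s₀ := by
          apply mul_le_mul_of_nonneg_left _ hMnn
          rw [abs_of_nonneg (by linarith)]
          linarith
  -- put it together
  have hfinal : (∫ z in s..smin, fV z) + c * Real.log s
      = (∫ z in s..s₀, (fV z - c/z)) + c * Real.log s₀
        + ∫ z in s₀..smin, fV z := by
    rw [hsplit, hi1, hlogint]; ring
  calc |(∫ z in s..smin, fV z) + c * Real.log s|
      = |(∫ z in s..s₀, (fV z - c/z)) + c * Real.log s₀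
        + ∫ z in s₀..smin, fV z| := by rw [hfinal]
    _ ≤ |∫ z in s..s₀, (fV z - c/z)| + |c * Real.log s₀|
        + |∫ z in s₀..smin, fV z| := by
          apply le_trans (abs_add_le _ _)
          gcongr
          exact abs_add_le _ _
    _ ≤ C := by rw [hCdef]; linarith
end

section
/- Let a < b be real numbers, ε > 0, μ ∈ ℝ, r₀ > 0 and c₀ > 0. Let R : [a,b] → ℝ be C¹ with R(z) ≥ r₀ for all z; let V : [a,b] → ℝ be C¹ with V(z) − μ ≥ c₀ for all z; and let q : [a,b] → ℝ be continuous. Let φ : [a,b] → ℂ be C² and satisfy −ε² (R(z) φ'(z))'/R(z) + (V(z) + ε q(z)) φ(z) = μ φ(z) on [a,b]. Define E⁺(z) := ε² |φ'(z)|² + (V(z) − μ) |φ(z)|², and set C₀ := (sup_{[a,b]} |V'|)/c₀ + 2 (sup_{[a,b]} |R'|)/r₀ + (sup_{[a,b]} |q|) (1 + 1/c₀). Then for all s, t ∈ [a,b]: E⁺(t) ≤ E⁺(s) · exp( (2/ε) |∫_s^t √(V(z) − μ) dz| + C₀ |t − s| ). -/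
open MeasureTheory

set_option maxHeartbeats 1000000
open Set intervalIntegral


-- helper 1: derivative of ‖f x‖^2 for f : ℝ → ℂ
lemma hd_normsq {f : ℝ → ℂ} {f' : ℂ} {s : Set ℝ} {z : ℝ}
    (hf : HasDerivWithinAt f f' s z) :
    HasDerivWithinAt (fun x => ‖f x‖^2) (2 * ((starRingEnd ℂ) (f z) * f').re) s z := by
  have hre : HasDerivWithinAt (fun x => (f x).re) f'.re s z :=
    Complex.reCLM.hasFDerivAt.comp_hasDerivWithinAt z hf
  have him : HasDerivWithinAt (fun x => (f x).im) f'.im s z :=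
    Complex.imCLM.hasFDerivAt.comp_hasDerivWithinAt z hf
  have h := (hre.mul hre).add (him.mul him)
  have heq : (fun x => ‖f x‖^2) = fun x => (f x).re * (f x).re + (f x).im * (f x).im := by
    funext x
    rw [Complex.sq_norm, Complex.normSq_apply]
  rw [heq]
  refine h.congr_deriv ?_
  simp [Complex.mul_re]
  ring

lemma gronwall_both (a b : ℝ) (E E' g : ℝ → ℝ)
    (hg : ContinuousOn g (Set.Icc a b))
    (hE : ∀ z ∈ Set.Icc a b, HasDerivWithinAt E (E' z) (Set.Icc a b) z)
    (hbd : ∀ z ∈ Set.Icc a b, |E' z| ≤ g z * E z) :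
    ∀ s ∈ Set.Icc a b, ∀ t ∈ Set.Icc a b, s ≤ t →
      E t ≤ E s * Real.exp (∫ z in s..t, g z) ∧
      E s ≤ E t * Real.exp (∫ z in s..t, g z) := by
  set G : ℝ → ℝ := fun z => ∫ x in a..z, g x with hGdef
  have hint : ∀ u ∈ Set.Icc a b, ∀ v ∈ Set.Icc a b, IntervalIntegrable g volume u v := by
    intro u hu v hv
    exact (hg.mono (Set.uIcc_subset_Icc hu hv)).intervalIntegrable
  have hGd : ∀ z ∈ Set.Icc a b, HasDerivWithinAt G (g z) (Set.Icc a b) z := by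
    intro z hz
    haveI : Fact (z ∈ Set.Icc a b) := ⟨hz⟩
    exact intervalIntegral.integral_hasDerivWithinAt_right
      (hint a (Set.left_mem_Icc.2 (hz.1.trans hz.2)) z hz)
      (hg.stronglyMeasurableAtFilter_nhdsWithin measurableSet_Icc z)
      (hg z hz)
  -- H decreasing
  have hH : ∀ z ∈ Set.Icc a b,
      HasDerivWithinAt (fun x => E x * Real.exp (-(G x)))
        ((E' z - g z * E z) * Real.exp (-(G z))) (Set.Icc a b) z := by
    intro z hz
    have := (hE z hz).mul ((hGd z hz).neg.exp)
    refine this.congr_deriv ?_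
    simp only [Pi.neg_apply]
    ring
  have hK : ∀ z ∈ Set.Icc a b,
      HasDerivWithinAt (fun x => E x * Real.exp (G x))
        ((E' z + g z * E z) * Real.exp (G z)) (Set.Icc a b) z := by
    intro z hz
    have := (hE z hz).mul ((hGd z hz).exp)
    refine this.congr_deriv ?_
    ring
  have hHanti : AntitoneOn (fun x => E x * Real.exp (-(G x))) (Set.Icc a b) := by
    apply antitoneOn_of_hasDerivWithinAt_nonpos (convex_Icc a b)
      (fun x hx => ((hH x hx).continuousWithinAt))
      (fun x hx => (hH x (interior_subset hx)).mono interior_subset)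
    intro x hx
    have hx' := interior_subset hx
    have h1 := hbd x hx'
    have h2 : E' x ≤ g x * E x := (le_abs_self _).trans h1
    have : E' x - g x * E x ≤ 0 := by linarith
    exact mul_nonpos_of_nonpos_of_nonneg this (Real.exp_nonneg _)
  have hKmono : MonotoneOn (fun x => E x * Real.exp (G x)) (Set.Icc a b) := by
    apply monotoneOn_of_hasDerivWithinAt_nonneg (convex_Icc a b)
      (fun x hx => ((hK x hx).continuousWithinAt))
      (fun x hx => (hK x (interior_subset hx)).mono interior_subset)
    intro x hx
    have hx' := interior_subset hx
    have h1 := hbd x hx'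
    have h2 : -(g x * E x) ≤ E' x := neg_le_of_abs_le h1
    have : 0 ≤ E' x + g x * E x := by linarith
    exact mul_nonneg this (Real.exp_nonneg _)
  intro s hs t ht hst
  have hGG : (∫ z in s..t, g z) = G t - G s := by
    rw [hGdef]
    have := intervalIntegral.integral_add_adjacent_intervals
      (hint a (Set.left_mem_Icc.2 (hs.1.trans hs.2)) s hs)
      (hint s hs t ht)
    simp only []
    linarith [this]
  constructor
  · have h := hHanti hs ht hst
    calc E t = E t * Real.exp (-(G t)) * Real.exp (G t) := by
          rw [mul_assoc, ← Real.exp_add]; simp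
      _ ≤ E s * Real.exp (-(G s)) * Real.exp (G t) :=
          mul_le_mul_of_nonneg_right h (Real.exp_nonneg _)
      _ = E s * Real.exp (∫ z in s..t, g z) := by
          rw [hGG, mul_assoc, ← Real.exp_add]; ring_nf
  · have h := hKmono hs ht hst
    calc E s = E s * Real.exp (G s) * Real.exp (-(G s)) := by
          rw [mul_assoc, ← Real.exp_add]; simp
      _ ≤ E t * Real.exp (G t) * Real.exp (-(G s)) :=
          mul_le_mul_of_nonneg_right h (Real.exp_nonneg _)
      _ = E t * Real.exp (∫ z in s..t, g z) := by
          rw [hGG, mul_assoc, ← Real.exp_add]; ring_nf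

lemma coeff_bound (ε c₀ r₀ MV MR Mq p w σ D : ℝ)
    (hε : 0 < ε) (hc₀ : 0 < c₀) (hr₀ : 0 < r₀)
    (hMV0 : 0 ≤ MV) (hMR0 : 0 ≤ MR) (hMq0 : 0 ≤ Mq)
    (hp0 : 0 ≤ p) (hw0 : 0 ≤ w) (hσ0 : 0 ≤ σ) (hσc : c₀ ≤ σ^2)
    (hD : D ≤ 4*σ^2*(w*p) + 2*ε*Mq*(w*p) + 2*ε^2*(MR/r₀)*p^2 + MV*w^2) :
    D ≤ ((2/ε)*σ + (MV/c₀ + 2*MR/r₀ + Mq*(1+1/c₀))) * (ε^2*p^2 + σ^2*w^2) := by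
  have i1 : 4*σ^2*(w*p) ≤ (2/ε)*σ*(ε^2*p^2 + σ^2*w^2) := by
    rw [div_mul_eq_mul_div, div_mul_eq_mul_div, le_div_iff₀ hε]
    nlinarith [mul_nonneg hσ0 (sq_nonneg (ε*p - σ*w))]
  have hw2 : c₀ * w^2 ≤ σ^2 * w^2 := by nlinarith [sq_nonneg w]
  have h2 : w^2 ≤ (1/c₀)*(σ^2*w^2) := by
    rw [one_div, inv_mul_eq_div, le_div_iff₀ hc₀]
    nlinarith
  have i2 : 2*ε*Mq*(w*p) ≤ Mq*(1+1/c₀)*(ε^2*p^2 + σ^2*w^2) := by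
    have h1 : 2*ε*(w*p) ≤ ε^2*p^2 + w^2 := by nlinarith [sq_nonneg (ε*p - w)]
    have b1 := mul_le_mul_of_nonneg_left h1 hMq0
    have b2 := mul_le_mul_of_nonneg_left h2 hMq0
    have n1 : 0 ≤ Mq*(σ^2*w^2) := mul_nonneg hMq0 (mul_nonneg (sq_nonneg _) (sq_nonneg _))
    have n2 : 0 ≤ Mq*(1/c₀)*(ε^2*p^2) :=
      mul_nonneg (mul_nonneg hMq0 (one_div_nonneg.2 hc₀.le))
        (mul_nonneg (sq_nonneg _) (sq_nonneg _))
    nlinarith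
  have i3 : 2*ε^2*(MR/r₀)*p^2 ≤ (2*MR/r₀)*(ε^2*p^2 + σ^2*w^2) := by
    have h3 : (0:ℝ) ≤ MR/r₀ := div_nonneg hMR0 hr₀.le
    have n4 : 0 ≤ (MR/r₀)*(σ^2*w^2) := mul_nonneg h3 (mul_nonneg (sq_nonneg σ) (sq_nonneg w))
    have e4 : (2*MR/r₀)*(ε^2*p^2 + σ^2*w^2) - 2*ε^2*(MR/r₀)*p^2 = 2*((MR/r₀)*(σ^2*w^2)) := by
      ring
    linarith
  have i4 : MV*w^2 ≤ (MV/c₀)*(ε^2*p^2 + σ^2*w^2) := by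
    rw [div_mul_eq_mul_div, le_div_iff₀ hc₀]
    have b3 := mul_le_mul_of_nonneg_left hw2 hMV0
    have n3 : 0 ≤ MV*(ε^2*p^2) := mul_nonneg hMV0 (mul_nonneg (sq_nonneg _) (sq_nonneg _))
    nlinarith
  have hexp : ((2/ε)*σ + (MV/c₀ + 2*MR/r₀ + Mq*(1+1/c₀))) * (ε^2*p^2 + σ^2*w^2)
      = (2/ε)*σ*(ε^2*p^2 + σ^2*w^2) + (MV/c₀)*(ε^2*p^2 + σ^2*w^2)
        + (2*MR/r₀)*(ε^2*p^2 + σ^2*w^2) + Mq*(1+1/c₀)*(ε^2*p^2 + σ^2*w^2) := by ring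
  linarith

lemma pointwise_bound (ε μ c₀ r₀ MV MR Mq Vz V'z R'z Rz qz : ℝ) (φz φ'z φ''z : ℂ)
    (hε : 0 < ε) (hc₀ : 0 < c₀) (hr₀ : 0 < r₀)
    (hVz : c₀ ≤ Vz - μ) (hRz : r₀ ≤ Rz)
    (hMV : |V'z| ≤ MV) (hMR : |R'z| ≤ MR) (hMq : |qz| ≤ Mq)
    (hkey : (ε:ℂ)^2 * φ''z = ((Vz - μ : ℝ):ℂ) * φz + ((ε * qz : ℝ):ℂ) * φz
      - (ε:ℂ)^2 * ((R'z / Rz : ℝ):ℂ) * φ'z) :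
    |2*ε^2 * ((starRingEnd ℂ) φ'z * φ''z).re
      + (V'z * ‖φz‖^2 + (Vz - μ) * (2 * ((starRingEnd ℂ) φz * φ'z).re))|
      ≤ ((2/ε) * Real.sqrt (Vz - μ) + (MV/c₀ + 2*MR/r₀ + Mq*(1+1/c₀)))
          * (ε^2 * ‖φ'z‖^2 + (Vz - μ) * ‖φz‖^2) := by
  set X := ((starRingEnd ℂ) φz * φ'z).re with hX
  set p := ‖φ'z‖ with hp
  set w := ‖φz‖ with hw
  set σ := Real.sqrt (Vz - μ) with hσ
  have hσ2 : σ^2 = Vz - μ := Real.sq_sqrt (hc₀.le.trans hVz)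
  have hσ0 : 0 ≤ σ := Real.sqrt_nonneg _
  have hp0 : 0 ≤ p := norm_nonneg _
  have hw0 : 0 ≤ w := norm_nonneg _
  have hMV0 : 0 ≤ MV := (abs_nonneg _).trans hMV
  have hMR0 : 0 ≤ MR := (abs_nonneg _).trans hMR
  have hMq0 : 0 ≤ Mq := (abs_nonneg _).trans hMq
  -- identity for first term
  have hid : 2*ε^2 * ((starRingEnd ℂ) φ'z * φ''z).re
      = 2*(Vz - μ)*X + 2*ε*qz*X - 2*ε^2*(R'z/Rz)*p^2 := by
    have hre := congrArg Complex.re hkey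
    have him := congrArg Complex.im hkey
    simp [Complex.mul_re, Complex.mul_im, ← Complex.ofReal_pow] at hre him
    simp [hX, hp, Complex.mul_re, Complex.conj_re, Complex.conj_im,
      Complex.sq_norm, Complex.normSq_apply]
    linear_combination (2*φ'z.re)*hre + (2*φ'z.im)*him
  have hE'eq : 2*ε^2 * ((starRingEnd ℂ) φ'z * φ''z).re
      + (V'z * w^2 + (Vz - μ) * (2 * X))
      = 4*(Vz - μ)*X + 2*ε*qz*X - 2*ε^2*(R'z/Rz)*p^2 + V'z*w^2 := by
    rw [hid]; ring
  rw [hE'eq]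
  -- |X| ≤ w * p
  have hXb : |X| ≤ w * p := by
    calc |X| ≤ ‖(starRingEnd ℂ) φz * φ'z‖ := Complex.abs_re_le_norm _
      _ = w * p := by
          rw [norm_mul, Complex.norm_conj]
  have hρ : |R'z / Rz| ≤ MR / r₀ := by
    rw [abs_div, abs_of_pos (hr₀.trans_le hRz)]
    exact div_le_div₀ hMR0 hMR hr₀ hRz
  -- term bounds
  have t1 : |4*(Vz - μ)*X| ≤ 4*σ^2*(w*p) := by
    rw [abs_mul, abs_of_nonneg (by nlinarith : (0:ℝ) ≤ 4*(Vz - μ)), hσ2]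
    exact mul_le_mul_of_nonneg_left hXb (by nlinarith)
  have t2 : |2*ε*qz*X| ≤ 2*ε*Mq*(w*p) := by
    rw [abs_mul]
    have h1 : |2*ε*qz| ≤ 2*ε*Mq := by
      rw [abs_mul, abs_of_nonneg (by linarith : (0:ℝ) ≤ 2*ε)]
      exact mul_le_mul_of_nonneg_left hMq (by linarith)
    exact mul_le_mul h1 hXb (abs_nonneg X) (mul_nonneg (by linarith) hMq0)
  have t3 : |2*ε^2*(R'z/Rz)*p^2| ≤ 2*ε^2*(MR/r₀)*p^2 := by
    rw [abs_mul, abs_mul, abs_of_nonneg (by positivity : (0:ℝ) ≤ 2*ε^2),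
      abs_of_nonneg (sq_nonneg p)]
    exact mul_le_mul_of_nonneg_right
      (mul_le_mul_of_nonneg_left hρ (by positivity)) (sq_nonneg p)
  have t4 : |V'z*w^2| ≤ MV*w^2 := by
    rw [abs_mul, abs_of_nonneg (sq_nonneg w)]
    exact mul_le_mul_of_nonneg_right hMV (sq_nonneg w)
  have htri : |4*(Vz - μ)*X + 2*ε*qz*X - 2*ε^2*(R'z/Rz)*p^2 + V'z*w^2|
      ≤ 4*σ^2*(w*p) + 2*ε*Mq*(w*p) + 2*ε^2*(MR/r₀)*p^2 + MV*w^2 := by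
    have a1 : |4*(Vz - μ)*X + 2*ε*qz*X - 2*ε^2*(R'z/Rz)*p^2 + V'z*w^2|
        ≤ |4*(Vz - μ)*X + 2*ε*qz*X - 2*ε^2*(R'z/Rz)*p^2| + |V'z*w^2| := abs_add_le _ _
    have a2 : |4*(Vz - μ)*X + 2*ε*qz*X - 2*ε^2*(R'z/Rz)*p^2|
        ≤ |4*(Vz - μ)*X + 2*ε*qz*X| + |2*ε^2*(R'z/Rz)*p^2| := by
      rw [sub_eq_add_neg]
      exact (abs_add_le _ _).trans (by rw [abs_neg])
    have a3 : |4*(Vz - μ)*X + 2*ε*qz*X| ≤ |4*(Vz - μ)*X| + |2*ε*qz*X| := abs_add_le _ _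
    linarith
  have hσc : c₀ ≤ σ^2 := by rw [hσ2]; exact hVz
  have hfin : ε^2*p^2 + (Vz - μ)*w^2 = ε^2*p^2 + σ^2*w^2 := by rw [hσ2]
  rw [hfin]
  refine coeff_bound ε c₀ r₀ MV MR Mq p w σ _ hε hc₀ hr₀ hMV0 hMR0 hMq0 hp0 hw0 hσ0 hσc ?_
  exact htri


/-- Lemma 4.7 (GronwallAgmon, single-solution form): for an eigenfunction `φ` of the
1D semiclassical operator `-ε² R⁻¹(Rφ')' + (V + εq)φ = μφ` on `[a,b]`, below the
potential, the energy density `E⁺ = ε²|φ'|² + (V-μ)|φ|²` satisfies a Grönwall-type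
bound with rate `(2/ε)` times the Agmon distance, up to an explicit factor. -/
theorem stmt14 (a b : ℝ) (hab : a < b) (ε μ r₀ c₀ : ℝ)
    (hε : 0 < ε) (hr₀ : 0 < r₀) (hc₀ : 0 < c₀)
    (R R' V V' q : ℝ → ℝ) (φ φ' φ'' : ℝ → ℂ)
    (hR : ∀ z ∈ Set.Icc a b, HasDerivWithinAt R (R' z) (Set.Icc a b) z)
    (hR' : ContinuousOn R' (Set.Icc a b))
    (hRpos : ∀ z ∈ Set.Icc a b, r₀ ≤ R z)
    (hV : ∀ z ∈ Set.Icc a b, HasDerivWithinAt V (V' z) (Set.Icc a b) z)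
    (hV' : ContinuousOn V' (Set.Icc a b))
    (hVμ : ∀ z ∈ Set.Icc a b, c₀ ≤ V z - μ)
    (hq : ContinuousOn q (Set.Icc a b))
    (hφ : ∀ z ∈ Set.Icc a b, HasDerivWithinAt φ (φ' z) (Set.Icc a b) z)
    (hφ' : ∀ z ∈ Set.Icc a b, HasDerivWithinAt φ' (φ'' z) (Set.Icc a b) z)
    (hφ'' : ContinuousOn φ'' (Set.Icc a b))
    (hode : ∀ z ∈ Set.Icc a b,
      -(ε:ℂ)^2 * (((R' z : ℂ) * φ' z + (R z : ℂ) * φ'' z) / (R z : ℂ))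
        + ((V z : ℂ) + (ε:ℂ) * (q z : ℂ)) * φ z = (μ:ℂ) * φ z) :
    ∀ s ∈ Set.Icc a b, ∀ t ∈ Set.Icc a b,
      ε^2 * ‖φ' t‖^2 + (V t - μ) * ‖φ t‖^2 ≤
        (ε^2 * ‖φ' s‖^2 + (V s - μ) * ‖φ s‖^2) *
          Real.exp ((2/ε) * |∫ z in s..t, Real.sqrt (V z - μ)| +
            (sSup ((fun z => |V' z|) '' Set.Icc a b) / c₀
              + 2 * sSup ((fun z => |R' z|) '' Set.Icc a b) / r₀
              + sSup ((fun z => |q z|) '' Set.Icc a b) * (1 + 1/c₀)) * |t - s|) := by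
  have haIcc : a ∈ Set.Icc a b := Set.left_mem_Icc.2 hab.le
  set MV := sSup ((fun z => |V' z|) '' Set.Icc a b) with hMVdef
  set MR := sSup ((fun z => |R' z|) '' Set.Icc a b) with hMRdef
  set Mq := sSup ((fun z => |q z|) '' Set.Icc a b) with hMqdef
  have hMV : ∀ z ∈ Set.Icc a b, |V' z| ≤ MV := fun z hz =>
    le_csSup ((isCompact_Icc.image_of_continuousOn hV'.abs).bddAbove) ⟨z, hz, rfl⟩
  have hMR : ∀ z ∈ Set.Icc a b, |R' z| ≤ MR := fun z hz =>
    le_csSup ((isCompact_Icc.image_of_continuousOn hR'.abs).bddAbove) ⟨z, hz, rfl⟩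
  have hMq : ∀ z ∈ Set.Icc a b, |q z| ≤ Mq := fun z hz =>
    le_csSup ((isCompact_Icc.image_of_continuousOn hq.abs).bddAbove) ⟨z, hz, rfl⟩
  set C₀ : ℝ := MV/c₀ + 2*MR/r₀ + Mq*(1+1/c₀) with hC₀def
  set g : ℝ → ℝ := fun z => (2/ε) * Real.sqrt (V z - μ) + C₀ with hgdef
  set E : ℝ → ℝ := fun z => ε^2 * ‖φ' z‖^2 + (V z - μ) * ‖φ z‖^2 with hEdef
  set E' : ℝ → ℝ := fun z => 2*ε^2 * ((starRingEnd ℂ) (φ' z) * φ'' z).re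
      + (V' z * ‖φ z‖^2 + (V z - μ) * (2 * ((starRingEnd ℂ) (φ z) * φ' z).re)) with hE'def
  have hVcont : ContinuousOn V (Set.Icc a b) := fun z hz => (hV z hz).continuousWithinAt
  have hgcont : ContinuousOn g (Set.Icc a b) := by
    apply ContinuousOn.add _ continuousOn_const
    exact continuousOn_const.mul
      (Real.continuous_sqrt.comp_continuousOn (hVcont.sub continuousOn_const))
  have hEd : ∀ z ∈ Set.Icc a b, HasDerivWithinAt E (E' z) (Set.Icc a b) z := by
    intro z hz
    have h1 := hd_normsq (hφ' z hz)
    have h2 := hd_normsq (hφ z hz)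
    have h3 : HasDerivWithinAt (fun x => V x - μ) (V' z) (Set.Icc a b) z :=
      (hV z hz).sub_const μ
    have h4 := (h1.const_mul (ε^2)).add (h3.mul h2)
    rw [hEdef, hE'def]
    refine h4.congr_deriv ?_
    ring
  have hkey : ∀ z ∈ Set.Icc a b, (ε:ℂ)^2 * φ'' z
      = ((V z - μ : ℝ):ℂ) * φ z + ((ε * q z : ℝ):ℂ) * φ z
        - (ε:ℂ)^2 * ((R' z / R z : ℝ):ℂ) * φ' z := by
    intro z hz
    have hRc : (R z : ℂ) ≠ 0 := by exact_mod_cast (hr₀.trans_le (hRpos z hz)).ne'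
    have h := hode z hz
    push_cast at h ⊢
    field_simp at h ⊢
    linear_combination -h
  have hbd : ∀ z ∈ Set.Icc a b, |E' z| ≤ g z * E z := by
    intro z hz
    exact pointwise_bound ε μ c₀ r₀ MV MR Mq (V z) (V' z) (R' z) (R z) (q z)
      (φ z) (φ' z) (φ'' z) hε hc₀ hr₀ (hVμ z hz) (hRpos z hz)
      (hMV z hz) (hMR z hz) (hMq z hz) (hkey z hz)
  have main := gronwall_both a b E E' g hgcont hEd hbd
  have hsqrtint : ∀ u ∈ Set.Icc a b, ∀ v ∈ Set.Icc a b,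
      IntervalIntegrable (fun z => Real.sqrt (V z - μ)) volume u v := by
    intro u hu v hv
    exact ((Real.continuous_sqrt.comp_continuousOn
      (hVcont.sub continuousOn_const)).mono (Set.uIcc_subset_Icc hu hv)).intervalIntegrable
  intro s hs t ht
  have hgsplit : ∀ u ∈ Set.Icc a b, ∀ v ∈ Set.Icc a b,
      (∫ z in u..v, g z) = (2/ε) * (∫ z in u..v, Real.sqrt (V z - μ)) + C₀ * (v - u) := by
    intro u hu v hv
    rw [hgdef]
    simp only []
    rw [intervalIntegral.integral_add ((hsqrtint u hu v hv).const_mul (2/ε))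
      intervalIntegrable_const, intervalIntegral.integral_const_mul,
      intervalIntegral.integral_const, smul_eq_mul]
    ring
  rcases le_total s t with h | h
  · have hres := (main s hs t ht h).1
    have hint0 : 0 ≤ ∫ z in s..t, Real.sqrt (V z - μ) :=
      intervalIntegral.integral_nonneg h (fun u _ => Real.sqrt_nonneg _)
    have heq : (∫ z in s..t, g z)
        = (2/ε) * |∫ z in s..t, Real.sqrt (V z - μ)| + C₀ * |t - s| := by
      rw [hgsplit s hs t ht, abs_of_nonneg hint0, abs_of_nonneg (sub_nonneg.2 h)]
    rw [heq] at hres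
    exact hres
  · have hres := (main t ht s hs h).2
    have hint0 : 0 ≤ ∫ z in t..s, Real.sqrt (V z - μ) :=
      intervalIntegral.integral_nonneg h (fun u _ => Real.sqrt_nonneg _)
    have heq : (∫ z in t..s, g z)
        = (2/ε) * |∫ z in s..t, Real.sqrt (V z - μ)| + C₀ * |t - s| := by
      rw [hgsplit t ht s hs, intervalIntegral.integral_symm t s, abs_neg,
        abs_of_nonneg hint0, abs_sub_comm t s, abs_of_nonneg (sub_nonneg.2 h)]
    rw [heq] at hres
    exact hres
end
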